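/- arXiv:1410.2623 — 9 statements merged into one kernel-verified Lean document; each statement's English description precedes it below -/
import Mathlib

section
/- Let f(q) = ∑_{k=0}^∞ q^k a_k be a power series with quaternionic coefficients converging on the open unit ball B(0;1) of the quaternions. Fix an imaginary unit I (a quaternion with I² = -1), and suppose that Re[f'(q)] > 0 for all q in B(0;1), where f'(q) = ∑_{k=1}^∞ k q^{k-1} a_k. Then f is injective on the slice B(0;1) ∩ ℂ_I, where ℂ_I = {x + I y : x, y ∈ ℝ}. -/
noncomputable def quatReCLM : Quaternion ℝ →L[ℝ] ℝ :=
  LinearMap.toContinuousLinearMap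
    { toFun := fun q => q.re
      map_add' := fun a b => rfl
      map_smul' := fun s a => rfl }

lemma slice_commute (I : Quaternion ℝ) (x y x' y' : ℝ) :
    Commute ((x : Quaternion ℝ) + y • I) ((x' : Quaternion ℝ) + y' • I) := by
  have h1 : Commute ((x : Quaternion ℝ)) ((x' : Quaternion ℝ) + y' • I) :=
    Quaternion.coe_commute x _
  have h2 : Commute (y • I) ((x' : Quaternion ℝ)) := (Quaternion.coe_commute x' _).symm
  have h3 : Commute (y • I) (y' • I) := ((Commute.refl I).smul_left y).smul_right y'
  exact h1.add_left (h2.add_right h3)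

set_option maxHeartbeats 1000000 in
/-- If a quaternionic power series `f(q) = ∑ qᵏ aₖ` converges on the unit ball and the
real part of its slice derivative is positive there, then `f` is injective on the slice
`B(0;1) ∩ ℂ_I` for any imaginary unit `I`. -/
theorem stmt0 (a : ℕ → Quaternion ℝ) (I : Quaternion ℝ) (hI : I ^ 2 = -1)
    (hconv : ∀ q : Quaternion ℝ, ‖q‖ < 1 → Summable (fun k : ℕ => q ^ k * a k))
    (hconv' : ∀ q : Quaternion ℝ, ‖q‖ < 1 →
      Summable (fun k : ℕ => (k : ℝ) • (q ^ (k - 1) * a k)))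
    (hpos : ∀ q : Quaternion ℝ, ‖q‖ < 1 →
      0 < (∑' k : ℕ, (k : ℝ) • (q ^ (k - 1) * a k)).re) :
    Set.InjOn (fun q : Quaternion ℝ => ∑' k : ℕ, q ^ k * a k)
      {q : Quaternion ℝ | ‖q‖ < 1 ∧ ∃ x y : ℝ, q = (x : Quaternion ℝ) + y • I} := by
  rintro p ⟨hp1, xp, yp, hpI⟩ q ⟨hq1, xq, yq, hqI⟩ heq
  by_contra hne
  -- basic setup
  set d : Quaternion ℝ := q - p with hd
  have hd0 : d ≠ 0 := sub_ne_zero.mpr (fun h => hne h.symm)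
  have hcpq : Commute p q := by rw [hpI, hqI]; exact slice_commute I xp yp xq yq
  have hcdp : Commute d p := (hcpq.symm.sub_left (Commute.refl p))
  -- the path
  set z : ℝ → Quaternion ℝ := fun t => p + t • d with hz
  have hcdz : ∀ t, Commute d (z t) := fun t =>
    hcdp.add_right ((Commute.refl d).smul_right t)
  have hz0 : z 0 = p := by simp [hz]
  have hz1 : z 1 = q := by simp [hz, hd]
  -- radii
  set r : ℝ := max ‖p‖ ‖q‖ with hr
  have hr1 : r < 1 := max_lt hp1 hq1
  have hr0 : 0 ≤ r := le_trans (norm_nonneg p) (le_max_left _ _)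
  set r' : ℝ := (2*r+1)/3 with hr'
  set r'' : ℝ := (r+2)/3 with hr''
  have hrr' : r < r' := by rw [hr']; linarith
  have hr'r'' : r' < r'' := by rw [hr', hr'']; linarith
  have hr''1 : r'' < 1 := by rw [hr'']; linarith
  have hr'0 : 0 < r' := by rw [hr']; linarith
  have hr''0 : 0 < r'' := by rw [hr'']; linarith
  -- the set
  set s : Set ℝ := {t : ℝ | ‖z t‖ < r'} with hs
  have hzconv : ∀ t ∈ Set.Icc (0:ℝ) 1, ‖z t‖ ≤ r := by
    intro t ⟨ht0, ht1⟩
    have : z t = (1 - t) • p + t • q := by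
      rw [hz]; simp only [smul_sub, sub_smul, one_smul, hd]; abel
    rw [this]
    calc ‖(1 - t) • p + t • q‖ ≤ ‖(1-t) • p‖ + ‖t • q‖ := norm_add_le _ _
      _ = (1-t) * ‖p‖ + t * ‖q‖ := by
          rw [norm_smul, norm_smul, Real.norm_eq_abs, Real.norm_eq_abs,
            abs_of_nonneg (by linarith), abs_of_nonneg ht0]
      _ ≤ (1-t) * r + t * r := by
          gcongr
          · exact le_max_left _ _
          · exact le_max_right _ _
      _ = r := by ring
  have hIcc : Set.Icc (0:ℝ) 1 ⊆ s := fun t ht => lt_of_le_of_lt (hzconv t ht) hrr'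
  have hs_open : IsOpen s := by
    have : Continuous fun t : ℝ => ‖z t‖ := by fun_prop
    exact isOpen_lt this continuous_const
  have hs_conv : Convex ℝ s := by
    intro t1 ht1 t2 ht2 b c hb hc hbc
    have hzc : z (b * t1 + c * t2) = b • z t1 + c • z t2 := by
      have : b • z t1 + c • z t2 = (b + c) • p + (b * t1 + c * t2) • d := by
        simp only [hz, smul_add, smul_smul]; module
      rw [this, hbc, one_smul]
    simp only [hs, Set.mem_setOf_eq, smul_eq_mul, hzc]
    rcases eq_or_lt_of_le hb with hb0 | hb0
    · rw [← hb0] at hbc ⊢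
      simp only [zero_smul, zero_add] at hbc ⊢
      rw [hbc, one_smul]; exact ht2
    rcases eq_or_lt_of_le hc with hc0 | hc0
    · rw [← hc0] at hbc ⊢
      simp only [zero_smul, add_zero] at hbc ⊢
      rw [hbc, one_smul]; exact ht1
    calc ‖b • z t1 + c • z t2‖ ≤ ‖b • z t1‖ + ‖c • z t2‖ := norm_add_le _ _
      _ = b * ‖z t1‖ + c * ‖z t2‖ := by
          rw [norm_smul, norm_smul, Real.norm_eq_abs, Real.norm_eq_abs,
            abs_of_nonneg hb, abs_of_nonneg hc]
      _ < b * r' + c * r' := by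
          apply add_lt_add
          · exact (mul_lt_mul_iff_right₀ hb0).2 ht1
          · exact (mul_lt_mul_iff_right₀ hc0).2 ht2
      _ = r' := by rw [← add_mul, hbc, one_mul]
  have hr'1 : r' < 1 := lt_trans hr'r'' hr''1
  have hs_pre : IsPreconnected s := hs_conv.isPreconnected
  have h0s : (0:ℝ) ∈ s := hIcc ⟨le_refl 0, zero_le_one⟩
  have hzs1 : ∀ t ∈ s, ‖z t‖ < 1 := fun t ht => lt_trans ht hr'1
  -- derivative of the path
  have hzderiv : ∀ t : ℝ, HasDerivAt z d t := by
    intro t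
    have h1 : HasDerivAt (fun t : ℝ => t • d) ((1:ℝ) • d) t :=
      (hasDerivAt_id t).smul_const d
    rw [one_smul] at h1
    exact h1.const_add p
  -- derivative of powers of the path
  have key : ∀ (n : ℕ) (t : ℝ),
      HasDerivAt (fun t => z t ^ n) ((n : ℝ) • (z t ^ (n - 1) * d)) t := by
    intro n
    induction n with
    | zero => intro t; simpa using hasDerivAt_const t (1 : Quaternion ℝ)
    | succ n ih =>
      intro t
      have h1 : HasDerivAt (fun t => z t ^ n * z t)
          ((n : ℝ) • (z t ^ (n - 1) * d) * z t + z t ^ n * d) t := (ih t).mul (hzderiv t)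
      have h2 : (n : ℝ) • (z t ^ (n - 1) * d) * z t + z t ^ n * d
          = ((n + 1 : ℕ) : ℝ) • (z t ^ (n + 1 - 1) * d) := by
        cases n with
        | zero => simp
        | succ m =>
          have hcm : z t ^ m * d * z t = z t ^ (m + 1) * d := by
            rw [mul_assoc, (hcdz t).eq, ← mul_assoc, ← pow_succ]
          simp only [Nat.add_sub_cancel, smul_mul_assoc, hcm]
          push_cast
          module
      rw [h2] at h1
      have : (fun t => z t ^ (n + 1)) = fun t => z t ^ n * z t := by
        funext t; rw [pow_succ]
      rw [this]
      exact h1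
  -- term functions and their derivatives
  set g : ℕ → ℝ → Quaternion ℝ := fun n t => z t ^ n * a n with hg
  set g' : ℕ → ℝ → Quaternion ℝ := fun n t => (n : ℝ) • (z t ^ (n - 1) * (d * a n)) with hg'
  have keyg : ∀ (n : ℕ) (t : ℝ), HasDerivAt (g n) (g' n t) t := by
    intro n t
    have := (key n t).mul_const (a n)
    have heq2 : (n : ℝ) • (z t ^ (n - 1) * d) * a n = g' n t := by
      rw [hg', smul_mul_assoc, mul_assoc]
    rw [heq2] at this
    exact this
  -- summable bound for the derivatives
  have hr''ball : ‖((r'' : ℝ) : Quaternion ℝ)‖ < 1 := by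
    rw [Quaternion.norm_coe, Real.norm_eq_abs, abs_of_pos hr''0]; exact hr''1
  have hsum'' := hconv' _ hr''ball
  have hbdd : ∃ C : ℝ, ∀ k : ℕ, (k : ℝ) * (r'' ^ (k - 1) * ‖a k‖) ≤ C := by
    have ht0 := hsum''.tendsto_atTop_zero.norm
    rw [norm_zero] at ht0
    obtain ⟨C, hC⟩ := ht0.bddAbove_range
    refine ⟨C, fun k => ?_⟩
    have := hC (Set.mem_range_self k)
    calc (k : ℝ) * (r'' ^ (k - 1) * ‖a k‖)
        = ‖(k : ℝ) • (((r'' : ℝ) : Quaternion ℝ) ^ (k - 1) * a k)‖ := by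
          rw [norm_smul, norm_mul, norm_pow, Quaternion.norm_coe, Real.norm_eq_abs,
            Real.norm_eq_abs, abs_of_nonneg (Nat.cast_nonneg k), abs_of_pos hr''0]
      _ ≤ C := this
  obtain ⟨C, hC⟩ := hbdd
  have hC0 : 0 ≤ C := le_trans (by simp) (hC 0)
  set u : ℕ → ℝ := fun k => ‖d‖ * ((k : ℝ) * (r' ^ (k - 1) * ‖a k‖)) with hu
  have hgeo : Summable (fun k : ℕ => (r' / r'') ^ (k - 1)) := by
    have hx0 : 0 < r' / r'' := div_pos hr'0 hr''0
    have hx1 : r' / r'' < 1 := (div_lt_one hr''0).mpr hr'r''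
    refine Summable.of_nonneg_of_le (fun k => le_of_lt (pow_pos hx0 _)) (fun k => ?_)
      ((summable_geometric_of_lt_one (le_of_lt hx0) hx1).mul_left (r'' / r'))
    cases k with
    | zero =>
      simp only [pow_zero]
      rw [pow_zero, mul_one]
      exact le_of_lt ((one_lt_div hr'0).mpr hr'r'')
    | succ m =>
      rw [Nat.add_sub_cancel, pow_succ, ← mul_assoc]
      have h5 : r'' / r' * (r' / r'') ^ m * (r' / r'') = (r' / r'') ^ m := by
        rw [mul_comm (r'' / r') _, mul_assoc, div_mul_div_comm, mul_comm r'' r',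
          div_self (by positivity), mul_one]
      rw [h5]
  have husum : Summable u := by
    refine Summable.of_nonneg_of_le (fun k => ?_) (fun k => ?_)
      ((hgeo.mul_left (‖d‖ * C)))
    · show (0:ℝ) ≤ ‖d‖ * ((k : ℝ) * (r' ^ (k - 1) * ‖a k‖))
      positivity
    · show ‖d‖ * ((k : ℝ) * (r' ^ (k - 1) * ‖a k‖)) ≤ ‖d‖ * C * (r' / r'') ^ (k - 1)
      have h6 : (r' / r'') ^ (k - 1) * r'' ^ (k - 1) = r' ^ (k - 1) := by
        rw [← mul_pow, div_mul_cancel₀ _ (ne_of_gt hr''0)]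
      have hkey : (k : ℝ) * (r' ^ (k - 1) * ‖a k‖)
          = ((k : ℝ) * (r'' ^ (k - 1) * ‖a k‖)) * (r' / r'') ^ (k - 1) := by
        rw [← h6]; ring
      rw [hkey, ← mul_assoc]
      apply mul_le_mul_of_nonneg_right _ (by positivity)
      gcongr
      exact hC k
  have hbound : ∀ (n : ℕ) (t : ℝ), t ∈ s → ‖g' n t‖ ≤ u n := by
    intro n t ht
    have hzt : ‖z t‖ ≤ r' := le_of_lt ht
    calc ‖g' n t‖ = (n : ℝ) * (‖z t‖ ^ (n - 1) * (‖d‖ * ‖a n‖)) := by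
          rw [hg', norm_smul, norm_mul, norm_pow, norm_mul, Real.norm_eq_abs,
            abs_of_nonneg (Nat.cast_nonneg n)]
      _ ≤ (n : ℝ) * (r' ^ (n - 1) * (‖d‖ * ‖a n‖)) := by gcongr
      _ = u n := by rw [hu]; ring
  -- the sum near 0
  have hg0 : Summable (fun n => g n 0) := by
    have := hconv p hp1
    apply this.congr
    intro n
    show p ^ n * a n = z 0 ^ n * a n
    rw [hz0]
  -- derivative of the full series
  set F : ℝ → Quaternion ℝ := fun t => ∑' n, g n t with hF
  set G : ℝ → Quaternion ℝ := fun t => ∑' k : ℕ, (k : ℝ) • (z t ^ (k - 1) * a k) with hG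
  have hFderiv : ∀ t ∈ s, HasDerivAt F (d * G t) t := by
    intro t ht
    have h1 : HasDerivAt F (∑' n, g' n t) t :=
      hasDerivAt_tsum_of_isPreconnected husum hs_open hs_pre (fun n y _ => keyg n y) hbound h0s hg0 ht
    have h2 : (∑' n, g' n t) = d * G t := by
      show (∑' n, g' n t) = d * ∑' k : ℕ, (k : ℝ) • (z t ^ (k - 1) * a k)
      rw [← Summable.tsum_mul_left d (hconv' (z t) (hzs1 t ht))]
      apply tsum_congr
      intro n
      show (n : ℝ) • (z t ^ (n - 1) * (d * a n)) = d * ((n : ℝ) • (z t ^ (n - 1) * a n))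
      rw [mul_smul_comm]
      congr 1
      rw [← mul_assoc, ← mul_assoc, ← ((hcdz t).pow_right (n - 1)).eq]
    rwa [h2] at h1
  -- the real-part function
  set ψ : ℝ → ℝ := fun t => quatReCLM (d⁻¹ * F t) with hψdef
  have hψ : ∀ t ∈ s, HasDerivAt ψ ((G t).re) t := by
    intro t ht
    have h1 : HasDerivAt (fun t => d⁻¹ * F t) (d⁻¹ * (d * G t)) t :=
      (hFderiv t ht).const_mul d⁻¹
    rw [← mul_assoc, inv_mul_cancel₀ hd0, one_mul] at h1
    exact (quatReCLM.hasFDerivAt.comp_hasDerivAt t h1 : _)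
  have hGpos : ∀ t ∈ s, 0 < (G t).re := fun t ht => hpos (z t) (hzs1 t ht)
  -- strict monotonicity
  have hmono : StrictMonoOn ψ (Set.Icc (0:ℝ) 1) := by
    apply strictMonoOn_of_deriv_pos (convex_Icc 0 1)
    · intro t ht
      exact (hψ t (hIcc ht)).continuousAt.continuousWithinAt
    · intro x hx
      rw [interior_Icc] at hx
      have hxs : x ∈ s := hIcc ⟨le_of_lt hx.1, le_of_lt hx.2⟩
      rw [(hψ x hxs).deriv]
      exact hGpos x hxs
  have h01 := hmono (Set.left_mem_Icc.mpr zero_le_one) (Set.right_mem_Icc.mpr zero_le_one)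
    zero_lt_one
  have hψeq : ψ 0 = ψ 1 := by
    have hF01 : F 0 = F 1 := by
      simp only [hF, hg, hz0, hz1]
      exact heq
    rw [hψdef]
    simp only [hF01]
  rw [hψeq] at h01
  exact lt_irrefl _ h01
end

section
/- Let z₁ ≠ z₂ lie in the same slice ℂ_I of the quaternions, let z(t) = t z₂ + (1-t) z₁ for t ∈ [0,1], and let f(q) = ∑_{k=0}^∞ q^k a_k be a quaternionic power series converging on a ball containing the segment [z₁,z₂]. Then f(z₂) - f(z₁) = (z₂ - z₁) · ∫₀¹ f'(z(t)) dt, where f'(q) = ∑_{k≥1} k q^{k-1} a_k. -/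
open MeasureTheory intervalIntegral

set_option maxHeartbeats 1000000

/-- For `z₁ ≠ z₂` in the same slice `ℂ_I` and a quaternionic power series converging on a
ball containing the segment `[z₁, z₂]`, one has
`f(z₂) - f(z₁) = (z₂ - z₁) · ∫₀¹ f'(z(t)) dt`. -/
theorem stmt1 (a : ℕ → Quaternion ℝ) (I : Quaternion ℝ) (hI : I ^ 2 = -1)
    (z₁ z₂ : Quaternion ℝ) (hz : z₁ ≠ z₂)
    (hz₁ : ∃ x y : ℝ, z₁ = (x : Quaternion ℝ) + y • I)
    (hz₂ : ∃ x y : ℝ, z₂ = (x : Quaternion ℝ) + y • I)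
    (R : ℝ)
    (hseg : ∀ t : ℝ, t ∈ Set.Icc (0 : ℝ) 1 → ‖(t : ℝ) • z₂ + (1 - t) • z₁‖ < R)
    (hconv : ∀ q : Quaternion ℝ, ‖q‖ < R → Summable (fun k : ℕ => q ^ k * a k))
    (hconv' : ∀ q : Quaternion ℝ, ‖q‖ < R →
      Summable (fun k : ℕ => (k : ℝ) • (q ^ (k - 1) * a k))) :
    (∑' k : ℕ, z₂ ^ k * a k) - (∑' k : ℕ, z₁ ^ k * a k) =
      (z₂ - z₁) * ∫ t in (0 : ℝ)..1,
        ∑' k : ℕ, (k : ℝ) • (((t : ℝ) • z₂ + (1 - t) • z₁) ^ (k - 1) * a k) := by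
  set w : ℝ → Quaternion ℝ := fun t => (t : ℝ) • z₂ + (1 - t) • z₁ with hw
  -- commutation
  have hc : Commute z₁ z₂ := by
    obtain ⟨x₁, y₁, rfl⟩ := hz₁
    obtain ⟨x₂, y₂, rfl⟩ := hz₂
    exact (Quaternion.coe_commute x₁ _).add_left
      (((Quaternion.coe_commute x₂ _).symm).add_right
        (((Commute.refl I).smul_left y₁).smul_right y₂))
  have hcz : ∀ t : ℝ, Commute (z₂ - z₁) (w t) := fun t =>
    ((((Commute.refl z₂).sub_left hc).smul_right t).add_right
      (((hc.symm.sub_left (Commute.refl z₁)).smul_right (1 - t))))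
  -- norms
  have hw0 : w 0 = z₁ := by simp [hw]
  have hw1 : w 1 = z₂ := by simp [hw]
  have hR1 : ‖z₁‖ < R := by have := hseg 0 ⟨le_refl _, zero_le_one⟩; simpa using this
  have hR2 : ‖z₂‖ < R := by have := hseg 1 ⟨zero_le_one, le_refl _⟩; simpa using this
  set r : ℝ := max ‖z₁‖ ‖z₂‖ with hrdef
  have hr0 : 0 ≤ r := le_trans (norm_nonneg _) (le_max_left _ _)
  have hrR : r < R := max_lt hR1 hR2
  have hwt : ∀ t : ℝ, t ∈ Set.Icc (0 : ℝ) 1 → ‖w t‖ ≤ r := by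
    intro t ht
    calc ‖w t‖ ≤ ‖t • z₂‖ + ‖(1 - t) • z₁‖ := norm_add_le _ _
      _ = t * ‖z₂‖ + (1 - t) * ‖z₁‖ := by
          rw [norm_smul, norm_smul, Real.norm_of_nonneg ht.1,
            Real.norm_of_nonneg (by linarith [ht.2])]
      _ ≤ t * r + (1 - t) * r :=
          add_le_add (mul_le_mul_of_nonneg_left (le_max_right _ _) ht.1)
            (mul_le_mul_of_nonneg_left (le_max_left _ _) (by linarith [ht.2]))
      _ = r := by ring
  -- summable norm bound
  have hsum_norm : Summable (fun k : ℕ => (k : ℝ) * (r ^ (k - 1) * ‖a k‖)) := by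
    have hq : ‖((r : ℝ) : Quaternion ℝ)‖ < R := by
      rw [Quaternion.norm_coe, Real.norm_of_nonneg hr0]; exact hrR
    have := hconv' _ hq
    have hnorm := (summable_norm_iff.mpr this)
    convert hnorm using 2 with k
    rw [norm_smul, Real.norm_natCast, norm_mul, norm_pow, Quaternion.norm_coe,
      Real.norm_of_nonneg hr0]
  -- derivative of w ^ k
  have hwderiv : ∀ t : ℝ, HasDerivAt w (z₂ - z₁) t := by
    intro t
    have h1 : HasDerivAt (fun s : ℝ => s • z₂) z₂ t := by
      simpa using (hasDerivAt_id t).smul_const z₂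
    have h2 : HasDerivAt (fun s : ℝ => (1 - s) • z₁) (-z₁) t := by
      simpa using ((hasDerivAt_const t (1 : ℝ)).sub (hasDerivAt_id t)).smul_const z₁
    have h3 : HasDerivAt w (z₂ + -z₁) t := h1.add h2
    simpa [sub_eq_add_neg] using h3
  have hderiv : ∀ (k : ℕ) (t : ℝ),
      HasDerivAt (fun s => w s ^ k) ((k : ℝ) • (w t ^ (k - 1) * (z₂ - z₁))) t := by
    intro k
    induction k with
    | zero => intro t; simpa using hasDerivAt_const t (1 : Quaternion ℝ)
    | succ n ih =>
      intro t
      have h := (hwderiv t).mul (ih t)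
      have heq : (fun s => w s ^ (n + 1)) = fun s => w s * w s ^ n := by
        funext s; rw [pow_succ']
      rw [heq]
      convert h using 1
      · rfl
      · rfl
      rcases n with _ | m
      · simp
      · have hcomm : (z₂ - z₁) * w t ^ (m + 1) = w t ^ (m + 1) * (z₂ - z₁) :=
          ((hcz t).pow_right (m + 1)).eq
        rw [hcomm]
        rw [mul_smul_comm]
        rw [← mul_assoc]
        rw [← pow_succ']
        have : ((m + 1 + 1 : ℕ) : ℝ) = ((m + 1 : ℕ) : ℝ) + 1 := by push_cast; ring
        rw [show (m + 1 + 1 - 1 : ℕ) = m + 1 from rfl, show (m + 1 - 1 : ℕ) = m from rfl]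
        rw [this, add_smul, one_smul, add_comm]
  -- per-k interval integral identity
  have hwc : Continuous w := by fun_prop
  have hk : ∀ k : ℕ, z₂ ^ k * a k - z₁ ^ k * a k =
      (z₂ - z₁) * ∫ t in (0 : ℝ)..1, (k : ℝ) • (w t ^ (k - 1) * a k) := by
    intro k
    have hd : ∀ t ∈ Set.uIcc (0 : ℝ) 1,
        HasDerivAt (fun s => w s ^ k * a k)
          ((z₂ - z₁) * ((k : ℝ) • (w t ^ (k - 1) * a k))) t := by
      intro t _
      have h := (hderiv k t).mul_const (a k)
      convert h using 1
      · rfl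
      rw [smul_mul_assoc, mul_smul_comm]
      congr 1
      rw [mul_assoc, ← mul_assoc, ((hcz t).pow_right (k - 1)).eq, mul_assoc]
    have hcont : Continuous fun t => (z₂ - z₁) * ((k : ℝ) • (w t ^ (k - 1) * a k)) := by
      fun_prop
    have hint := hcont.intervalIntegrable (μ := volume) (0 : ℝ) 1
    have hftc := integral_eq_sub_of_hasDerivAt hd hint
    rw [hw0, hw1] at hftc
    rw [← hftc]
    have hgint : IntervalIntegrable (fun t => (k : ℝ) • (w t ^ (k - 1) * a k))
        volume (0 : ℝ) 1 := by
      apply Continuous.intervalIntegrable; fun_prop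
    have := (ContinuousLinearMap.mul ℝ (Quaternion ℝ) (z₂ - z₁)).intervalIntegral_comp_comm
      hgint (a := (0:ℝ)) (b := 1) (μ := volume)
    simpa only [ContinuousLinearMap.mul_apply'] using this
  -- swap sum and integral
  have hbound : ∀ (k : ℕ), ∀ᵐ t ∂(volume : Measure ℝ), t ∈ Set.uIoc (0:ℝ) 1 →
      ‖(k : ℝ) • (w t ^ (k - 1) * a k)‖ ≤ (k : ℝ) * (r ^ (k - 1) * ‖a k‖) := by
    intro k
    filter_upwards with t ht
    have ht' : t ∈ Set.Icc (0:ℝ) 1 := by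
      rw [Set.uIoc_of_le zero_le_one] at ht; exact ⟨le_of_lt ht.1, ht.2⟩
    rw [norm_smul, Real.norm_natCast, norm_mul, norm_pow]
    have h1 : ‖w t‖ ^ (k - 1) ≤ r ^ (k - 1) :=
      pow_le_pow_left₀ (norm_nonneg _) (hwt t ht') _
    exact mul_le_mul_of_nonneg_left
      (mul_le_mul_of_nonneg_right h1 (norm_nonneg _)) (Nat.cast_nonneg k)
  have hswap : HasSum (fun k : ℕ => ∫ t in (0:ℝ)..1, (k : ℝ) • (w t ^ (k - 1) * a k))
      (∫ t in (0:ℝ)..1, ∑' k : ℕ, (k : ℝ) • (w t ^ (k - 1) * a k)) := by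
    apply intervalIntegral.hasSum_integral_of_dominated_convergence
      (fun (k : ℕ) (_ : ℝ) => (k : ℝ) * (r ^ (k - 1) * ‖a k‖))
    · intro k
      exact (Continuous.aestronglyMeasurable (by fun_prop))
    · exact hbound
    · filter_upwards with t _; exact hsum_norm
    · exact intervalIntegrable_const
    · filter_upwards with t ht
      have ht' : t ∈ Set.Icc (0:ℝ) 1 := by
        rw [Set.uIoc_of_le zero_le_one] at ht; exact ⟨le_of_lt ht.1, ht.2⟩
      exact Summable.hasSum (hconv' (w t) (hseg t ht'))
  calc (∑' k : ℕ, z₂ ^ k * a k) - (∑' k : ℕ, z₁ ^ k * a k)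
      = ∑' k : ℕ, (z₂ ^ k * a k - z₁ ^ k * a k) :=
        (((hconv z₂ hR2).hasSum.sub (hconv z₁ hR1).hasSum).tsum_eq).symm
    _ = ∑' k : ℕ, (z₂ - z₁) * ∫ t in (0 : ℝ)..1, (k : ℝ) • (w t ^ (k - 1) * a k) :=
        tsum_congr hk
    _ = (z₂ - z₁) * ∑' k : ℕ, ∫ t in (0 : ℝ)..1, (k : ℝ) • (w t ^ (k - 1) * a k) :=
        tsum_mul_left
    _ = (z₂ - z₁) * ∫ t in (0 : ℝ)..1, ∑' k : ℕ, (k : ℝ) • (w t ^ (k - 1) * a k) := by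
        rw [hswap.tsum_eq]
end

section
/- Let f(q) = ∑_{n=0}^∞ q^n a_n be a quaternionic power series with all coefficients a_n real, converging on B(0;1) and injective on B(0;1) ∩ ℂ_I for one imaginary unit I. Then f is injective on all of B(0;1). -/
open Quaternion
noncomputable section
namespace Stmt3Aux

lemma re_of_sq {J : Quaternion ℝ} (hJ : J * J = -1) : J.re = 0 := by
  have h1 : (J * J).re = (-1 : Quaternion ℝ).re := by rw [hJ]
  have h2 : (J * J).imI = (-1 : Quaternion ℝ).imI := by rw [hJ]
  have h3 : (J * J).imJ = (-1 : Quaternion ℝ).imJ := by rw [hJ]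
  have h4 : (J * J).imK = (-1 : Quaternion ℝ).imK := by rw [hJ]
  simp [Quaternion.re_mul, Quaternion.imI_mul, Quaternion.imJ_mul, Quaternion.imK_mul] at h1 h2 h3 h4
  nlinarith [sq_nonneg J.re, sq_nonneg J.imI, sq_nonneg J.imJ, sq_nonneg J.imK]

lemma normSq_of_sq {J : Quaternion ℝ} (hJ : J * J = -1) : normSq J = 1 := by
  have hre := re_of_sq hJ
  have h1 : (J * J).re = (-1 : Quaternion ℝ).re := by rw [hJ]
  simp [Quaternion.re_mul, hre] at h1
  rw [Quaternion.normSq_def', hre]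
  nlinarith

lemma norm_of_sq {J : Quaternion ℝ} (hJ : J * J = -1) : ‖J‖ = 1 := by
  have := Quaternion.normSq_eq_norm_mul_self J
  rw [normSq_of_sq hJ] at this
  nlinarith [norm_nonneg J]

lemma norm_coe_add_smul {J : Quaternion ℝ} (hJ : J * J = -1) (x y : ℝ) :
    ‖(x : Quaternion ℝ) + y • J‖ = Real.sqrt (x ^ 2 + y ^ 2) := by
  have hre := re_of_sq hJ
  have hns : normSq ((x : Quaternion ℝ) + y • J) = x ^ 2 + y ^ 2 := by
    rw [Quaternion.normSq_def']
    have hnsJ := normSq_of_sq hJ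
    rw [Quaternion.normSq_def', hre] at hnsJ
    simp [Quaternion.re_smul, Quaternion.imI_smul, Quaternion.imJ_smul, Quaternion.imK_smul, hre]
    nlinarith
  have h := Quaternion.normSq_eq_norm_mul_self ((x : Quaternion ℝ) + y • J)
  rw [hns] at h
  rw [show x ^ 2 + y ^ 2 = ‖(x : Quaternion ℝ) + y • J‖ * ‖(x : Quaternion ℝ) + y • J‖ from h]
  exact (Real.sqrt_mul_self (norm_nonneg _)).symm

lemma norm_lift {J : Quaternion ℝ} (hJ : J * J = -1) (z : ℂ) :
    ‖Complex.liftAux J hJ z‖ = ‖z‖ := by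
  have : (algebraMap ℝ (Quaternion ℝ)) z.re = ((z.re : ℝ) : Quaternion ℝ) := rfl
  rw [Complex.liftAux_apply, this, norm_coe_add_smul hJ,
    Complex.norm_def, Complex.normSq_apply]
  ring_nf


lemma summable_cx (a : ℕ → ℝ)
    (hconv : ∀ q : Quaternion ℝ, ‖q‖ < 1 →
      Summable (fun n : ℕ => q ^ n * ((a n : ℝ) : Quaternion ℝ)))
    {J : Quaternion ℝ} (hJ : J * J = -1) (z : ℂ) (hz : ‖z‖ < 1) :
    Summable (fun n : ℕ => z ^ n * ((a n : ℝ) : ℂ)) := by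
  set φ := Complex.liftAux J hJ with hφ
  have h1 := hconv (φ z) (by rw [norm_lift hJ]; exact hz)
  have h2 : Summable (fun n : ℕ => ‖(φ z) ^ n * ((a n : ℝ) : Quaternion ℝ)‖) := h1.norm
  apply Summable.of_norm
  convert h2 using 2 with n
  have key : (φ z) ^ n * ((a n : ℝ) : Quaternion ℝ) = φ (z ^ n * ((a n : ℝ) : ℂ)) := by
    rw [map_mul, map_pow]
    congr 1
    rw [show ((a n : ℝ) : ℂ) = algebraMap ℝ ℂ (a n) from rfl, AlgHom.commutes]
    rfl
  rw [key, norm_lift hJ]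

lemma tsum_lift (a : ℕ → ℝ)
    (hconv : ∀ q : Quaternion ℝ, ‖q‖ < 1 →
      Summable (fun n : ℕ => q ^ n * ((a n : ℝ) : Quaternion ℝ)))
    {J : Quaternion ℝ} (hJ : J * J = -1) (z : ℂ) (hz : ‖z‖ < 1) :
    ∑' n : ℕ, (Complex.liftAux J hJ z) ^ n * ((a n : ℝ) : Quaternion ℝ)
      = Complex.liftAux J hJ (∑' n : ℕ, z ^ n * ((a n : ℝ) : ℂ)) := by
  set φ := Complex.liftAux J hJ with hφ
  have hs := summable_cx a hconv hJ z hz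
  have hcont : Continuous φ := φ.toLinearMap.continuous_of_finiteDimensional
  have h2 := (hs.hasSum.map φ hcont).tsum_eq
  rw [← h2]
  congr 1
  funext n
  simp only [Function.comp_apply]
  rw [map_mul, map_pow]
  congr 1
  rw [show ((a n : ℝ) : ℂ) = algebraMap ℝ ℂ (a n) from rfl, AlgHom.commutes]
  rfl

lemma tsum_conj (a : ℕ → ℝ)
    (hconv : ∀ q : Quaternion ℝ, ‖q‖ < 1 →
      Summable (fun n : ℕ => q ^ n * ((a n : ℝ) : Quaternion ℝ)))
    {J : Quaternion ℝ} (hJ : J * J = -1) (z : ℂ) (hz : ‖z‖ < 1) :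
    ∑' n : ℕ, (starRingEnd ℂ z) ^ n * ((a n : ℝ) : ℂ)
      = starRingEnd ℂ (∑' n : ℕ, z ^ n * ((a n : ℝ) : ℂ)) := by
  have hs := summable_cx a hconv hJ z hz
  have h2 := (hs.hasSum.map (starRingEnd ℂ) Complex.continuous_conj).tsum_eq
  rw [← h2]
  congr 1
  funext n
  simp only [Function.comp_apply]
  rw [map_mul, map_pow, Complex.conj_ofReal]

lemma decomp {I : Quaternion ℝ} (hI : I * I = -1) (q : Quaternion ℝ) :
    ∃ J : Quaternion ℝ, J * J = -1 ∧ q = ((q.re : ℝ) : Quaternion ℝ) + ‖q.im‖ • J := by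
  by_cases h : q.im = 0
  · refine ⟨I, hI, ?_⟩
    rw [h, norm_zero, zero_smul, add_zero]
    conv_lhs => rw [← q.re_add_im, h, add_zero]
  · have hn : ‖q.im‖ ≠ 0 := norm_ne_zero_iff.2 h
    refine ⟨‖q.im‖⁻¹ • q.im, ?_, ?_⟩
    · have hvre : q.im.re = 0 := q.re_im
      have hstar : star q.im = -q.im := Quaternion.star_eq_neg.2 hvre
      have hv : q.im * q.im = -((normSq q.im : ℝ) : Quaternion ℝ) := by
        have h1 := Quaternion.self_mul_star (a := q.im)
        rw [hstar, mul_neg] at h1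
        exact neg_eq_iff_eq_neg.1 h1
      rw [smul_mul_smul_comm, hv, smul_neg]
      have hns : normSq q.im = ‖q.im‖ * ‖q.im‖ := Quaternion.normSq_eq_norm_mul_self q.im
      rw [hns,
        show ((‖q.im‖ * ‖q.im‖ : ℝ) : Quaternion ℝ) = (‖q.im‖ * ‖q.im‖ : ℝ) • (1 : Quaternion ℝ)
          by ext <;> simp,
        smul_smul, show ‖q.im‖⁻¹ * ‖q.im‖⁻¹ * (‖q.im‖ * ‖q.im‖) = 1 by field_simp, one_smul]
    · rw [smul_smul, mul_inv_cancel₀ hn, one_smul, q.re_add_im]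


end Stmt3Aux

end

/-- A quaternionic power series with real coefficients converging on the unit ball which is
injective on one slice `B(0;1) ∩ ℂ_I` is injective on all of `B(0;1)`. -/
theorem stmt3 (a : ℕ → ℝ)
    (hconv : ∀ q : Quaternion ℝ, ‖q‖ < 1 →
      Summable (fun n : ℕ => q ^ n * ((a n : ℝ) : Quaternion ℝ)))
    (I : Quaternion ℝ) (hI : I ^ 2 = -1)
    (hinj : Set.InjOn (fun q : Quaternion ℝ => ∑' n : ℕ, q ^ n * ((a n : ℝ) : Quaternion ℝ))
      {q : Quaternion ℝ | ‖q‖ < 1 ∧ ∃ x y : ℝ, q = (x : Quaternion ℝ) + y • I}) :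
    Set.InjOn (fun q : Quaternion ℝ => ∑' n : ℕ, q ^ n * ((a n : ℝ) : Quaternion ℝ))
      (Metric.ball (0 : Quaternion ℝ) 1) := by
  have hI' : I * I = -1 := by rw [← pow_two]; exact hI
  set F : ℂ → ℂ := fun z => ∑' n : ℕ, z ^ n * ((a n : ℝ) : ℂ) with hF
  -- injectivity of the complex series on the unit disc
  have hC : ∀ z w : ℂ, ‖z‖ < 1 → ‖w‖ < 1 → F z = F w → z = w := by
    intro z w hz hw hzw
    have hmem : ∀ u : ℂ, ‖u‖ < 1 → Complex.liftAux I hI' u ∈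
        {q : Quaternion ℝ | ‖q‖ < 1 ∧ ∃ x y : ℝ, q = (x : Quaternion ℝ) + y • I} := by
      intro u hu
      refine ⟨by rw [Stmt3Aux.norm_lift hI']; exact hu, u.re, u.im, ?_⟩
      rw [Complex.liftAux_apply]; rfl
    have h1 := Stmt3Aux.tsum_lift a hconv hI' z hz
    have h2 := Stmt3Aux.tsum_lift a hconv hI' w hw
    have hfeq := hinj (hmem z hz) (hmem w hw) (by simp only; rw [h1, h2]; exact congrArg _ hzw)
    exact (Complex.liftAux I hI').toRingHom.injective hfeq
  intro p hp q hq hpq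
  simp only [Metric.mem_ball, dist_zero_right] at hp hq
  simp only at hpq
  obtain ⟨J1, hJ1, hp1⟩ := Stmt3Aux.decomp hI' p
  obtain ⟨J2, hJ2, hq1⟩ := Stmt3Aux.decomp hI' q
  set z1 : ℂ := ⟨p.re, ‖p.im‖⟩ with hz1def
  set z2 : ℂ := ⟨q.re, ‖q.im‖⟩ with hz2def
  have hp1' : p = Complex.liftAux J1 hJ1 z1 := by rw [Complex.liftAux_apply]; exact hp1
  have hq1' : q = Complex.liftAux J2 hJ2 z2 := by rw [Complex.liftAux_apply]; exact hq1
  have hz1 : ‖z1‖ < 1 := by rw [← Stmt3Aux.norm_lift hJ1 z1, ← hp1']; exact hp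
  have hz2 : ‖z2‖ < 1 := by rw [← Stmt3Aux.norm_lift hJ2 z2, ← hq1']; exact hq
  have hfp : (∑' n : ℕ, p ^ n * ((a n : ℝ) : Quaternion ℝ)) = Complex.liftAux J1 hJ1 (F z1) := by
    rw [hp1']; exact Stmt3Aux.tsum_lift a hconv hJ1 z1 hz1
  have hfq : (∑' n : ℕ, q ^ n * ((a n : ℝ) : Quaternion ℝ)) = Complex.liftAux J2 hJ2 (F z2) := by
    rw [hq1']; exact Stmt3Aux.tsum_lift a hconv hJ2 z2 hz2
  have heq : ((F z1).re : Quaternion ℝ) + (F z1).im • J1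
      = ((F z2).re : Quaternion ℝ) + (F z2).im • J2 := by
    have := hpq
    rw [hfp, hfq, Complex.liftAux_apply, Complex.liftAux_apply] at this
    exact this
  have hre : (F z1).re = (F z2).re := by
    have h := congrArg QuaternionAlgebra.re heq
    simpa [Quaternion.re_smul, Stmt3Aux.re_of_sq hJ1, Stmt3Aux.re_of_sq hJ2] using h
  have him : (F z1).im • J1 = (F z2).im • J2 := by
    rw [hre] at heq
    exact add_left_cancel heq
  have habs : |(F z1).im| = |(F z2).im| := by
    have h := congrArg norm him
    rwa [norm_smul, norm_smul, Stmt3Aux.norm_of_sq hJ1, Stmt3Aux.norm_of_sq hJ2, mul_one, mul_one,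
      Real.norm_eq_abs, Real.norm_eq_abs] at h
  have hnormconj : ∀ u : ℂ, ‖starRingEnd ℂ u‖ = ‖u‖ := fun u => by
    rw [Complex.norm_conj]
  rcases abs_eq_abs.1 habs with hcase | hcase
  · -- (F z1).im = (F z2).im, hence F z1 = F z2 and z1 = z2
    have hz : z1 = z2 := hC z1 z2 hz1 hz2 (Complex.ext hre hcase)
    by_cases hb : (F z1).im = 0
    · -- F z1 is real, forcing z1 to be real
      have hreal : starRingEnd ℂ (F z1) = F z1 := Complex.conj_eq_iff_im.2 hb
      have hFc : F (starRingEnd ℂ z1) = F z1 := by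
        rw [hF]
        simp only
        rw [Stmt3Aux.tsum_conj a hconv hI' z1 hz1]
        exact hreal
      have hzc : starRingEnd ℂ z1 = z1 :=
        hC _ _ (by rw [hnormconj]; exact hz1) hz1 hFc
      have hy1 : ‖p.im‖ = 0 := by
        have h := congrArg Complex.im hzc
        simp only [Complex.conj_im] at h
        have : z1.im = 0 := by linarith
        simpa [hz1def] using this
      have hy2 : ‖q.im‖ = 0 := by
        have h := congrArg Complex.im hz
        simp only [hz1def, hz2def] at h
        rw [← h]; exact hy1
      have hx : p.re = q.re := congrArg Complex.re hz
      rw [hp1, hq1, hy1, hy2, hx, zero_smul, zero_smul]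
    · -- the imaginary units must coincide
      have hJ : J1 = J2 := by
        rw [← hcase] at him
        exact smul_right_injective (Quaternion ℝ) hb him
      have hx : p.re = q.re := congrArg Complex.re hz
      have hy : ‖p.im‖ = ‖q.im‖ := congrArg Complex.im hz
      rw [hp1, hq1, hx, hy, hJ]
  · -- (F z1).im = -(F z2).im, hence F z1 = conj (F z2) and z1 = conj z2
    have hw : F z1 = starRingEnd ℂ (F z2) := by
      apply Complex.ext
      · simpa using hre
      · simpa using hcase
    have hFc : F z1 = F (starRingEnd ℂ z2) := by
      rw [hw, hF]
      simp only
      rw [Stmt3Aux.tsum_conj a hconv hI' z2 hz2]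
    have hzc : z1 = starRingEnd ℂ z2 :=
      hC _ _ hz1 (by rw [hnormconj]; exact hz2) hFc
    have him1 : z1.im = -z2.im := by
      have h := congrArg Complex.im hzc
      simpa using h
    have hy1 : ‖p.im‖ = 0 := by
      have h1 : (0 : ℝ) ≤ ‖p.im‖ := norm_nonneg _
      have h2 : (0 : ℝ) ≤ ‖q.im‖ := norm_nonneg _
      have : z1.im = ‖p.im‖ := rfl
      have h3 : z2.im = ‖q.im‖ := rfl
      linarith [him1, this ▸ him1]
    have hy2 : ‖q.im‖ = 0 := by
      have h1 : (0 : ℝ) ≤ ‖p.im‖ := norm_nonneg _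
      have h2 : (0 : ℝ) ≤ ‖q.im‖ := norm_nonneg _
      have h3 : z1.im = ‖p.im‖ := rfl
      have h4 : z2.im = ‖q.im‖ := rfl
      linarith [him1]
    have hx : p.re = q.re := by
      have h := congrArg Complex.re hzc
      simpa using h
    rw [hp1, hq1, hy1, hy2, hx, zero_smul, zero_smul]
end

section
/- Let f(q) = ∑_{n=0}^∞ q^n a_n be a quaternionic power series with real coefficients converging on B(0;1), and suppose that for some imaginary unit I one has Re[f'(q)] > 0 for all q ∈ B(0;1) ∩ ℂ_I. Then Re[f'(q)] > 0 for all q ∈ B(0;1), and f is injective on B(0;1). -/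
open Quaternion



lemma quat_sq (p : ℍ) : p^2 = (2*p.re) • p - ((‖p‖^2 : ℝ) : ℍ) := by
  have h : ‖p‖^2 = normSq p := by
    rw [sq, Quaternion.normSq_eq_norm_mul_self]
  rw [pow_two, h]
  ext <;>
    simp only [Quaternion.re_mul, Quaternion.imI_mul, Quaternion.imJ_mul, Quaternion.imK_mul,
      Quaternion.re_sub, Quaternion.imI_sub, Quaternion.imJ_sub, Quaternion.imK_sub,
      Quaternion.re_smul, Quaternion.imI_smul, Quaternion.imJ_smul, Quaternion.imK_smul,
      Quaternion.re_coe, Quaternion.imI_coe, Quaternion.imJ_coe, Quaternion.imK_coe,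
      Quaternion.normSq_def', smul_eq_mul] <;> ring

lemma unit_props {J : ℍ} (h : J^2 = -1) : J.re = 0 ∧ ‖J‖ = 1 := by
  rw [pow_two] at h
  have h1 : J.re*J.re - J.imI*J.imI - J.imJ*J.imJ - J.imK*J.imK = -1 := by
    have := congrArg QuaternionAlgebra.re h; simpa [Quaternion.re_mul] using this
  have h2 : J.re * J.imI = 0 := by
    have := congrArg QuaternionAlgebra.imI h
    simp [Quaternion.imI_mul] at this; linarith
  have h3 : J.re * J.imJ = 0 := by
    have := congrArg QuaternionAlgebra.imJ h
    simp [Quaternion.imJ_mul] at this; linarith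
  have h4 : J.re * J.imK = 0 := by
    have := congrArg QuaternionAlgebra.imK h
    simp [Quaternion.imK_mul] at this; linarith
  have hre : J.re = 0 := by
    by_contra hne
    have hI : J.imI = 0 := by
      rcases mul_eq_zero.1 h2 with h | h; exact absurd h hne; exact h
    have hJ : J.imJ = 0 := by
      rcases mul_eq_zero.1 h3 with h | h; exact absurd h hne; exact h
    have hK : J.imK = 0 := by
      rcases mul_eq_zero.1 h4 with h | h; exact absurd h hne; exact h
    rw [hI, hJ, hK] at h1; nlinarith
  refine ⟨hre, ?_⟩
  have hns : ‖J‖ * ‖J‖ = 1 := by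
    rw [← Quaternion.normSq_eq_norm_mul_self, Quaternion.normSq_def']
    rw [hre] at h1 ⊢; nlinarith
  nlinarith [norm_nonneg J]

lemma sq_of_pure {J : ℍ} (h0 : J.re = 0) (h1 : ‖J‖ = 1) : J^2 = -1 := by
  rw [quat_sq, h0, h1]; simp

lemma re_pow_of_eq {p q : ℍ} (hre : p.re = q.re) (hn : ‖p‖ = ‖q‖) (n : ℕ) :
    (p^n).re = (q^n).re := by
  have key : ∀ m : ℕ, ∃ c d : ℝ, ∀ r : ℍ, r.re = p.re → ‖r‖ = ‖p‖ →
      r^m = c • r + ((d : ℝ) : ℍ) := by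
    intro m
    induction m with
    | zero => exact ⟨0, 1, fun r _ _ => by simp⟩
    | succ m ih =>
      obtain ⟨c, d, hcd⟩ := ih
      refine ⟨2*p.re*c + d, -(‖p‖^2)*c, fun r h1 h2 => ?_⟩
      have hr2 : r^2 = (2*r.re) • r - ((‖r‖^2 : ℝ) : ℍ) := quat_sq r
      have hc : ∀ x : ℝ, ((x : ℝ) : Quaternion ℝ) = x • (1 : Quaternion ℝ) := fun x => by
        rw [← Quaternion.coe_mul_eq_smul, mul_one]
      rw [pow_succ, hcd r h1 h2, add_mul, smul_mul_assoc, ← pow_two, hr2, h1, h2,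
        Quaternion.coe_mul_eq_smul, hc (‖p‖^2), hc (-(‖p‖^2)*c)]
      module
  obtain ⟨c, d, hcd⟩ := key n
  rw [hcd p rfl rfl, hcd q hre.symm hn.symm]
  simp [Quaternion.re_smul, hre]

noncomputable def reCLM : ℍ →L[ℝ] ℝ :=
  { toLinearMap := QuaternionAlgebra.reₗ _ _ _, cont := Quaternion.continuous_re }

@[simp] lemma reCLM_apply (q : ℍ) : reCLM q = q.re := rfl

/-- The slice embedding `ℂ → ℍ` determined by an imaginary unit `J`. -/
noncomputable def sl (J : Quaternion ℝ) : ℂ →L[ℝ] Quaternion ℝ :=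
  { toFun := fun z => ((z.re : ℝ) : Quaternion ℝ) + z.im • J,
    map_add' := by
      intro z w
      simp only [Complex.add_re, Complex.add_im, Quaternion.coe_add, add_smul]
      abel,
    map_smul' := by
      intro r z
      simp only [Complex.real_smul, Complex.mul_re, Complex.ofReal_re, Complex.ofReal_im,
        Complex.mul_im, RingHom.id_apply]
      rw [smul_add]
      simp only [zero_mul, sub_zero, zero_add, add_zero, Quaternion.coe_mul, smul_smul]
      congr 1
      rw [← Quaternion.coe_mul_eq_smul],
    cont := by
      apply Continuous.add
      · exact (Quaternion.continuous_coe).comp Complex.continuous_re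
      · exact Complex.continuous_im.smul continuous_const }

lemma sl_apply (J : Quaternion ℝ) (z : ℂ) :
    sl J z = ((z.re : ℝ) : Quaternion ℝ) + z.im • J := rfl

lemma sl_coe (J : Quaternion ℝ) (r : ℝ) : sl J (r : ℂ) = (r : Quaternion ℝ) := by
  simp [sl_apply]

lemma sl_one (J : Quaternion ℝ) : sl J 1 = 1 := by
  simpa using sl_coe J 1

lemma sl_mul {J : Quaternion ℝ} (hJ : J^2 = -1) (z w : ℂ) :
    sl J (z * w) = sl J z * sl J w := by
  have hc : ∀ x : ℝ, ((x : ℝ) : Quaternion ℝ) = x • (1 : Quaternion ℝ) := fun x => by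
    rw [← Quaternion.coe_mul_eq_smul, mul_one]
  simp only [sl_apply, Complex.mul_re, Complex.mul_im]
  rw [add_mul, mul_add, mul_add, ← Quaternion.coe_mul, Quaternion.coe_mul_eq_smul,
    smul_mul_assoc, Quaternion.mul_coe_eq_smul, smul_smul, smul_mul_smul_comm, ← pow_two, hJ]
  rw [hc (z.re * w.re - z.im * w.im), hc (z.re*w.re)]
  module

lemma sl_pow {J : Quaternion ℝ} (hJ : J^2 = -1) (z : ℂ) (n : ℕ) :
    sl J (z ^ n) = (sl J z) ^ n := by
  induction n with
  | zero => simpa using sl_one J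
  | succ n ih => rw [pow_succ, pow_succ, sl_mul hJ, ih]

lemma sl_re {J : Quaternion ℝ} (hJre : J.re = 0) (z : ℂ) : (sl J z).re = z.re := by
  simp [sl_apply, Quaternion.re_add, Quaternion.re_coe, Quaternion.re_smul, hJre]

lemma sl_norm {J : Quaternion ℝ} (hJ : J^2 = -1) (z : ℂ) : ‖sl J z‖ = ‖z‖ := by
  obtain ⟨h0, h1⟩ := unit_props hJ
  have hJn : J.imI^2 + J.imJ^2 + J.imK^2 = 1 := by
    have h2 := Quaternion.normSq_eq_norm_mul_self J
    rw [h1, Quaternion.normSq_def', h0] at h2; nlinarith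
  have h2 : ‖sl J z‖^2 = z.re^2 + z.im^2 := by
    rw [sq, ← Quaternion.normSq_eq_norm_mul_self, Quaternion.normSq_def']
    simp only [sl_apply, Quaternion.re_add, Quaternion.imI_add, Quaternion.imJ_add,
      Quaternion.imK_add, Quaternion.re_coe, Quaternion.imI_coe, Quaternion.imJ_coe,
      Quaternion.imK_coe, Quaternion.re_smul, Quaternion.imI_smul, Quaternion.imJ_smul,
      Quaternion.imK_smul, smul_eq_mul, h0, mul_zero, add_zero, zero_add]
    nlinarith [hJn]
  have h3 : ‖z‖^2 = z.re^2 + z.im^2 := by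
    rw [Complex.sq_norm, Complex.normSq_apply]; ring
  nlinarith [norm_nonneg (sl J z), norm_nonneg z]

lemma sl_inj {J : Quaternion ℝ} (hJ : J^2 = -1) : Function.Injective (sl J) := by
  obtain ⟨h0, h1⟩ := unit_props hJ
  intro z w h
  have : ‖sl J (z - w)‖ = 0 := by rw [map_sub, h]; simp
  rw [sl_norm hJ] at this
  have := norm_eq_zero.mp this
  exact sub_eq_zero.mp this

lemma im_sq_sum {J : Quaternion ℝ} (hJ : J^2 = -1) : J.imI^2 + J.imJ^2 + J.imK^2 = 1 := by
  obtain ⟨h0, h1⟩ := unit_props hJ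
  have h2 := Quaternion.normSq_eq_norm_mul_self J
  rw [h1, Quaternion.normSq_def', h0] at h2; nlinarith

section Summab

variable (a : ℕ → ℝ)

/-- bound from a summable sequence -/
lemma bound_of_summable {g : ℕ → Quaternion ℝ} (h : Summable g) :
    ∃ C : ℝ, ∀ n, ‖g n‖ ≤ C := by
  have h0 := h.tendsto_atTop_zero.norm
  simp only [norm_zero] at h0
  obtain ⟨C, hC⟩ := h0.bddAbove_range
  exact ⟨C, fun n => hC ⟨n, rfl⟩⟩

lemma keyA
    (hconv' : ∀ q : Quaternion ℝ, ‖q‖ < 1 →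
      Summable (fun n : ℕ => (n : ℝ) • (q ^ (n - 1) * ((a n : ℝ) : Quaternion ℝ))))
    {r : ℝ} (h0 : 0 ≤ r) (h1 : r < 1) :
    Summable (fun n : ℕ => (n : ℝ) * r ^ (n - 1) * |a n|) := by
  set r' : ℝ := (r + 1) / 2 with hr'
  have hr0 : 0 < r' := by positivity
  have hrr : r < r' := by rw [hr']; linarith
  have hr1 : r' < 1 := by rw [hr']; linarith
  have hs := hconv' ((r' : ℝ) : Quaternion ℝ)
    (by rw [Quaternion.norm_coe, Real.norm_eq_abs, abs_of_pos hr0]; exact hr1)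
  obtain ⟨C, hC⟩ := bound_of_summable hs
  have hnorm : ∀ n : ℕ, ‖(n : ℝ) • (((r' : ℝ) : Quaternion ℝ) ^ (n - 1) * ((a n : ℝ) : Quaternion ℝ))‖
      = (n : ℝ) * r' ^ (n - 1) * |a n| := by
    intro n
    rw [norm_smul, norm_mul, ← Quaternion.coe_pow, Quaternion.norm_coe, Quaternion.norm_coe]
    rw [Real.norm_natCast, Real.norm_eq_abs, Real.norm_eq_abs, abs_of_pos (pow_pos hr0 _)]
    ring
  have hle : ∀ n : ℕ, (n : ℝ) * r ^ (n - 1) * |a n| ≤ C * (r / r') ^ (n - 1) := by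
    intro n
    have hb := hC n
    rw [hnorm n] at hb
    have hx : r' ^ (n - 1) * (r / r') ^ (n - 1) = r ^ (n - 1) := by
      rw [← mul_pow, mul_div_cancel₀ _ (ne_of_gt hr0)]
    have : (n : ℝ) * r ^ (n - 1) * |a n| = ((n : ℝ) * r' ^ (n - 1) * |a n|) * (r / r') ^ (n - 1) := by
      rw [← hx]; ring
    rw [this]
    apply mul_le_mul_of_nonneg_right hb
    positivity
  have hgeom : Summable (fun n : ℕ => C * (r / r') ^ n) :=
    (summable_geometric_of_lt_one (by positivity) (by rw [div_lt_one hr0]; exact hrr)).mul_left C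
  have hshift : Summable (fun n : ℕ => C * (r / r') ^ (n - 1)) :=
    (summable_nat_add_iff 1).mp (by simpa using hgeom)
  exact Summable.of_nonneg_of_le (fun n => by positivity) hle hshift


lemma keyB
    (hconv : ∀ q : Quaternion ℝ, ‖q‖ < 1 →
      Summable (fun n : ℕ => q ^ n * ((a n : ℝ) : Quaternion ℝ)))
    {r : ℝ} (h0 : 0 ≤ r) (h1 : r < 1) :
    Summable (fun n : ℕ => r ^ n * |a n|) := by
  set r' : ℝ := (r + 1) / 2 with hr'
  have hr0 : 0 < r' := by positivity
  have hrr : r < r' := by rw [hr']; linarith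
  have hr1 : r' < 1 := by rw [hr']; linarith
  have hs := hconv ((r' : ℝ) : Quaternion ℝ)
    (by rw [Quaternion.norm_coe, Real.norm_eq_abs, abs_of_pos hr0]; exact hr1)
  obtain ⟨C, hC⟩ := bound_of_summable hs
  have hnorm : ∀ n : ℕ, ‖((r' : ℝ) : Quaternion ℝ) ^ n * ((a n : ℝ) : Quaternion ℝ)‖
      = r' ^ n * |a n| := by
    intro n
    rw [norm_mul, ← Quaternion.coe_pow, Quaternion.norm_coe, Quaternion.norm_coe,
      Real.norm_eq_abs, Real.norm_eq_abs, abs_of_pos (pow_pos hr0 _)]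
  have hle : ∀ n : ℕ, r ^ n * |a n| ≤ C * (r / r') ^ n := by
    intro n
    have hb := hC n
    rw [hnorm n] at hb
    have hx : r' ^ n * (r / r') ^ n = r ^ n := by
      rw [← mul_pow, mul_div_cancel₀ _ (ne_of_gt hr0)]
    have : r ^ n * |a n| = (r' ^ n * |a n|) * (r / r') ^ n := by rw [← hx]; ring
    rw [this]
    exact mul_le_mul_of_nonneg_right hb (by positivity)
  have hgeom : Summable (fun n : ℕ => C * (r / r') ^ n) :=
    (summable_geometric_of_lt_one (by positivity) (by rw [div_lt_one hr0]; exact hrr)).mul_left C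
  exact Summable.of_nonneg_of_le (fun n => by positivity) hle hgeom

end Summab

lemma part1 (a : ℕ → ℝ)
    (hconv' : ∀ q : Quaternion ℝ, ‖q‖ < 1 →
      Summable (fun n : ℕ => (n : ℝ) • (q ^ (n - 1) * ((a n : ℝ) : Quaternion ℝ))))
    (I : Quaternion ℝ) (hI : I ^ 2 = -1)
    (hpos : ∀ q : Quaternion ℝ, ‖q‖ < 1 → (∃ x y : ℝ, q = (x : Quaternion ℝ) + y • I) →
      0 < (∑' n : ℕ, (n : ℝ) • (q ^ (n - 1) * ((a n : ℝ) : Quaternion ℝ))).re) :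
    ∀ q : Quaternion ℝ, ‖q‖ < 1 →
      0 < (∑' n : ℕ, (n : ℝ) • (q ^ (n - 1) * ((a n : ℝ) : Quaternion ℝ))).re := by
  intro q hq
  obtain ⟨hIre, hInorm⟩ := unit_props hI
  set y : ℝ := ‖q.im‖ with hy
  set q' : Quaternion ℝ := ((q.re : ℝ) : Quaternion ℝ) + y • I with hqdef
  have hre : q'.re = q.re := by
    simp [hqdef, Quaternion.re_add, Quaternion.re_coe, Quaternion.re_smul, hIre]
  have hyim : y^2 = q.imI^2 + q.imJ^2 + q.imK^2 := by
    rw [hy, sq, ← Quaternion.normSq_eq_norm_mul_self, Quaternion.normSq_def']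
    simp [Quaternion.re_im, Quaternion.imI_im, Quaternion.imJ_im, Quaternion.imK_im]
  have hIn := im_sq_sum hI
  have hsq : ‖q'‖^2 = ‖q‖^2 := by
    rw [sq, sq, ← Quaternion.normSq_eq_norm_mul_self, ← Quaternion.normSq_eq_norm_mul_self,
      Quaternion.normSq_def', Quaternion.normSq_def']
    simp only [hqdef, Quaternion.re_add, Quaternion.imI_add, Quaternion.imJ_add,
      Quaternion.imK_add, Quaternion.re_coe, Quaternion.imI_coe, Quaternion.imJ_coe,
      Quaternion.imK_coe, Quaternion.re_smul, Quaternion.imI_smul, Quaternion.imJ_smul,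
      Quaternion.imK_smul, smul_eq_mul, hIre, mul_zero, add_zero, zero_add]
    nlinarith [hIn, hyim]
  have hnorm : ‖q'‖ = ‖q‖ := by
    nlinarith [norm_nonneg q', norm_nonneg q]
  have hq'lt : ‖q'‖ < 1 := by rw [hnorm]; exact hq
  have hterm : ∀ n : ℕ, ((n : ℝ) • (q ^ (n-1) * ((a n : ℝ) : Quaternion ℝ))).re
      = ((n : ℝ) • (q' ^ (n-1) * ((a n : ℝ) : Quaternion ℝ))).re := by
    intro n
    rw [Quaternion.mul_coe_eq_smul, Quaternion.mul_coe_eq_smul]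
    simp only [Quaternion.re_smul, smul_eq_mul]
    rw [re_pow_of_eq hre.symm hnorm.symm]
  have hmap : ∀ p : Quaternion ℝ, ‖p‖ < 1 →
      (∑' n : ℕ, (n : ℝ) • (p ^ (n-1) * ((a n : ℝ) : Quaternion ℝ))).re
      = ∑' n : ℕ, ((n : ℝ) • (p ^ (n-1) * ((a n : ℝ) : Quaternion ℝ))).re := by
    intro p hp
    exact (reCLM.map_tsum (hconv' p hp))
  rw [hmap q hq, tsum_congr hterm, ← hmap q' hq'lt]
  exact hpos q' hq'lt ⟨q.re, y, rfl⟩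

open MeasureTheory intervalIntegral

lemma complex_inj (a : ℕ → ℝ)
    (hA : ∀ r : ℝ, 0 ≤ r → r < 1 → Summable (fun n : ℕ => (n:ℝ) * r^(n-1) * |a n|))
    (hB : ∀ r : ℝ, 0 ≤ r → r < 1 → Summable (fun n : ℕ => r^n * |a n|))
    (hpos : ∀ z : ℂ, ‖z‖ < 1 → 0 < (∑' n : ℕ, (n:ℂ) * z^(n-1) * ((a n : ℝ) : ℂ)).re) :
    Set.InjOn (fun z : ℂ => ∑' n : ℕ, z^n * ((a n : ℝ) : ℂ)) (Metric.ball 0 1) := by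
  intro z hz w hw hfeq
  by_contra hne
  simp only [Metric.mem_ball, dist_zero_right] at hz hw
  set r : ℝ := max ‖z‖ ‖w‖ with hr
  have hr0 : 0 ≤ r := le_trans (norm_nonneg z) (le_max_left _ _)
  have hr1 : r < 1 := max_lt hz hw
  set γ : ℝ → ℂ := fun t => w + (t:ℂ) * (z - w) with hγ
  have hγcont : Continuous γ := by
    exact continuous_const.add (Complex.continuous_ofReal.mul continuous_const)
  have hγmem : ∀ t : ℝ, t ∈ Set.Icc (0:ℝ) 1 → ‖γ t‖ ≤ r := by
    intro t ht
    have h1 : γ t = ((1 - t : ℝ) : ℂ) * w + ((t:ℝ) : ℂ) * z := by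
      rw [hγ]; push_cast; ring
    rw [h1]
    calc ‖((1 - t : ℝ) : ℂ) * w + ((t:ℝ) : ℂ) * z‖
        ≤ ‖((1 - t : ℝ) : ℂ) * w‖ + ‖((t:ℝ) : ℂ) * z‖ := norm_add_le _ _
      _ = (1 - t) * ‖w‖ + t * ‖z‖ := by
          rw [norm_mul, norm_mul, Complex.norm_real, Complex.norm_real, Real.norm_eq_abs,
            Real.norm_eq_abs, abs_of_nonneg (by linarith [ht.2] : (0:ℝ) ≤ 1 - t),
            abs_of_nonneg ht.1]
      _ ≤ (1 - t) * r + t * r := by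
          have h2 : ‖w‖ ≤ r := le_max_right _ _
          have h3 : ‖z‖ ≤ r := le_max_left _ _
          have := ht.1; have := ht.2
          nlinarith
      _ = r := by ring
  have hu : Summable (fun n : ℕ => (n:ℝ) * r^(n-1) * |a n|) := hA r hr0 hr1
  set F : ℕ → ℝ → ℂ := fun n t => (n:ℂ) * (γ t)^(n-1) * (z - w) * ((a n : ℝ) : ℂ) with hF
  have hcont : ∀ n, Continuous (F n) := by
    intro n
    exact ((continuous_const.mul (hγcont.pow (n-1))).mul continuous_const).mul continuous_const
  -- FTC term by term
  have hftc : ∀ n : ℕ, z^n * ((a n : ℝ) : ℂ) - w^n * ((a n : ℝ) : ℂ)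
      = ∫ t in (0:ℝ)..1, F n t := by
    intro n
    have hderiv : ∀ t : ℝ, HasDerivAt (fun s : ℝ => (γ s)^n)
        ((n:ℂ) * (γ t)^(n-1) * (z-w)) t := by
      intro t
      have h0 : HasDerivAt (fun s : ℂ => w + s * (z - w)) (z - w) ((t:ℝ) : ℂ) := by
        simpa using ((hasDerivAt_id ((t:ℝ):ℂ)).mul_const (z-w)).const_add w
      have h1 := (h0.pow n).comp_ofReal
      simpa [hγ, mul_comm, mul_assoc] using h1
    have hint : IntervalIntegrable (fun t : ℝ => (n:ℂ) * (γ t)^(n-1) * (z-w))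
        MeasureTheory.volume 0 1 :=
      ((continuous_const.mul (hγcont.pow (n-1))).mul continuous_const).intervalIntegrable _ _
    have h2 := intervalIntegral.integral_eq_sub_of_hasDerivAt
      (f := fun t : ℝ => (γ t)^n) (fun t _ => hderiv t) hint
    have h3 : γ 1 = z := by rw [hγ]; push_cast; ring
    have h4 : γ 0 = w := by rw [hγ]; push_cast; ring
    simp only [h3, h4] at h2
    calc z^n * ((a n : ℝ) : ℂ) - w^n * ((a n : ℝ) : ℂ)
        = (z^n - w^n) * ((a n : ℝ) : ℂ) := by ring
      _ = (∫ t in (0:ℝ)..1, (n:ℂ) * (γ t)^(n-1) * (z-w)) * ((a n : ℝ) : ℂ) := by rw [h2]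
      _ = ∫ t in (0:ℝ)..1, F n t := by
          rw [← intervalIntegral.integral_mul_const]
  -- interchange sum and integral
  set μ : Measure ℝ := MeasureTheory.volume.restrict (Set.Ioc (0:ℝ) 1) with hμ
  have hFint : ∀ n, MeasureTheory.Integrable (F n) μ := fun n =>
    (hcont n).integrableOn_Ioc
  have hFbound : ∀ n : ℕ, ∀ t ∈ Set.Icc (0:ℝ) 1,
      ‖F n t‖ ≤ ((n:ℝ) * r^(n-1) * |a n|) * ‖z - w‖ := by
    intro n t ht
    rw [hF]
    simp only [norm_mul, Complex.norm_natCast, norm_pow, Complex.norm_real, Real.norm_eq_abs]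
    calc (n:ℝ) * ‖γ t‖^(n-1) * ‖z - w‖ * |a n|
        ≤ (n:ℝ) * r^(n-1) * ‖z - w‖ * |a n| := by
          gcongr
          exact hγmem t ht
      _ = ((n:ℝ) * r^(n-1) * |a n|) * ‖z - w‖ := by ring
  have hFnormint : ∀ n : ℕ, (∫ t, ‖F n t‖ ∂μ) ≤ ((n:ℝ) * r^(n-1) * |a n|) * ‖z - w‖ := by
    intro n
    have hbd : ∀ᵐ t ∂μ, ‖F n t‖ ≤ ((n:ℝ) * r^(n-1) * |a n|) * ‖z - w‖ := by
      rw [hμ, MeasureTheory.ae_restrict_iff' measurableSet_Ioc]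
      filter_upwards with t ht
      exact hFbound n t ⟨le_of_lt ht.1, ht.2⟩
    calc (∫ t, ‖F n t‖ ∂μ) ≤ ∫ _, ((n:ℝ) * r^(n-1) * |a n|) * ‖z - w‖ ∂μ :=
          MeasureTheory.integral_mono_ae (hFint n).norm (MeasureTheory.integrable_const _) hbd
      _ = ((n:ℝ) * r^(n-1) * |a n|) * ‖z - w‖ := by
          rw [MeasureTheory.integral_const, hμ]
          simp [Real.volume_Ioc]
  have hFsum : Summable (fun n : ℕ => ∫ t, ‖F n t‖ ∂μ) := by
    apply Summable.of_nonneg_of_le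
      (fun n => MeasureTheory.integral_nonneg (fun t => norm_nonneg _)) hFnormint
      (hu.mul_right _)
  have hkey := MeasureTheory.hasSum_integral_of_summable_integral_norm hFint hFsum
  -- the sum function
  set G : ℂ → ℂ := fun s => ∑' n : ℕ, (n:ℂ) * s^(n-1) * ((a n : ℝ) : ℂ) with hG
  have hsumF : ∀ t : ℝ, (∑' n, F n t) = G (γ t) * (z - w) := by
    intro t
    rw [hG, ← tsum_mul_right]
    exact tsum_congr fun n => by rw [hF]; ring
  have hGcont : ContinuousOn (fun t : ℝ => G (γ t)) (Set.Icc 0 1) := by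
    have : ContinuousOn (fun t : ℝ => ∑' n : ℕ, (n:ℂ) * (γ t)^(n-1) * ((a n : ℝ) : ℂ))
        (Set.Icc 0 1) := by
      apply continuousOn_tsum (u := fun n : ℕ => (n:ℝ) * r^(n-1) * |a n|)
      · intro n
        exact ((continuous_const.mul (hγcont.pow (n-1))).mul continuous_const).continuousOn
      · exact hu
      · intro n t ht
        simp only [norm_mul, Complex.norm_natCast, norm_pow, Complex.norm_real,
          Real.norm_eq_abs]
        gcongr
        exact hγmem t ht
    exact this
  have huIcc : Set.uIcc (0:ℝ) 1 = Set.Icc 0 1 := Set.uIcc_of_le zero_le_one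
  have hGint : IntervalIntegrable (fun t : ℝ => G (γ t)) MeasureTheory.volume 0 1 := by
    apply ContinuousOn.intervalIntegrable
    rw [huIcc]; exact hGcont
  have hReCont : ContinuousOn (fun t : ℝ => (G (γ t)).re) (Set.Icc 0 1) :=
    Complex.continuous_re.comp_continuousOn hGcont
  have hReint : IntervalIntegrable (fun t : ℝ => (G (γ t)).re) MeasureTheory.volume 0 1 := by
    apply ContinuousOn.intervalIntegrable
    rw [huIcc]; exact hReCont
  have hposint : 0 < ∫ t in (0:ℝ)..1, (G (γ t)).re := by
    apply intervalIntegral_pos_of_pos_on hReint _ zero_lt_one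
    intro t ht
    exact hpos (γ t) (lt_of_le_of_lt (hγmem t ⟨le_of_lt ht.1, le_of_lt ht.2⟩) hr1)
  have hRe : (∫ t in (0:ℝ)..1, G (γ t)).re = ∫ t in (0:ℝ)..1, (G (γ t)).re :=
    (ContinuousLinearMap.intervalIntegral_comp_comm Complex.reCLM hGint).symm
  have hne0 : (∫ t in (0:ℝ)..1, G (γ t)) ≠ 0 := by
    intro h
    rw [h] at hRe
    simp only [Complex.zero_re] at hRe
    rw [← hRe] at hposint
    exact lt_irrefl 0 hposint
  have hsum1 : Summable (fun n : ℕ => z^n * ((a n : ℝ) : ℂ)) := by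
    apply Summable.of_norm
    have : ∀ n : ℕ, ‖z^n * ((a n : ℝ) : ℂ)‖ = ‖z‖^n * |a n| := by
      intro n; rw [norm_mul, norm_pow, Complex.norm_real, Real.norm_eq_abs]
    rw [funext this]
    exact hB ‖z‖ (norm_nonneg z) hz
  have hsum2 : Summable (fun n : ℕ => w^n * ((a n : ℝ) : ℂ)) := by
    apply Summable.of_norm
    have : ∀ n : ℕ, ‖w^n * ((a n : ℝ) : ℂ)‖ = ‖w‖^n * |a n| := by
      intro n; rw [norm_mul, norm_pow, Complex.norm_real, Real.norm_eq_abs]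
    rw [funext this]
    exact hB ‖w‖ (norm_nonneg w) hw
  have hchain : (∑' n : ℕ, z^n * ((a n : ℝ) : ℂ)) - (∑' n : ℕ, w^n * ((a n : ℝ) : ℂ))
      = (∫ t in (0:ℝ)..1, G (γ t)) * (z - w) := by
    calc (∑' n : ℕ, z^n * ((a n : ℝ) : ℂ)) - (∑' n : ℕ, w^n * ((a n : ℝ) : ℂ))
        = ∑' n : ℕ, (z^n * ((a n : ℝ) : ℂ) - w^n * ((a n : ℝ) : ℂ)) :=
          (Summable.tsum_sub hsum1 hsum2).symm
      _ = ∑' n : ℕ, ∫ t in (0:ℝ)..1, F n t := tsum_congr hftc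
      _ = ∑' n : ℕ, ∫ t, F n t ∂μ := by
          refine tsum_congr fun n => ?_
          rw [intervalIntegral.integral_of_le zero_le_one, hμ]
      _ = ∫ t, (∑' n, F n t) ∂μ := hkey.tsum_eq
      _ = ∫ t, G (γ t) * (z - w) ∂μ := by
          exact MeasureTheory.integral_congr_ae (Filter.Eventually.of_forall hsumF)
      _ = ∫ t in (0:ℝ)..1, G (γ t) * (z - w) := by
          rw [intervalIntegral.integral_of_le zero_le_one, hμ]
      _ = (∫ t in (0:ℝ)..1, G (γ t)) * (z - w) := intervalIntegral.integral_mul_const _ _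
  have : (0:ℂ) = (∫ t in (0:ℝ)..1, G (γ t)) * (z - w) := by
    rw [← hchain]
    simp only at hfeq
    rw [hfeq, sub_self]
  exact (mul_ne_zero hne0 (sub_ne_zero.mpr hne)) this.symm

section Glue

open Quaternion Metric

lemma exists_slice (p : Quaternion ℝ) (I : Quaternion ℝ) (hI : I^2 = -1) :
    ∃ (J : Quaternion ℝ) (z : ℂ), J^2 = -1 ∧ p = sl J z ∧ z.im = ‖p.im‖ ∧ z.re = p.re := by
  by_cases him : p.im = 0
  · refine ⟨I, ⟨p.re, ‖p.im‖⟩, hI, ?_, rfl, rfl⟩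
    rw [him]
    simp only [norm_zero]
    have : p = ((p.re : ℝ) : Quaternion ℝ) := by
      conv_lhs => rw [← Quaternion.re_add_im p]
      rw [him, add_zero]
    rw [this, sl_apply]
    simp
  · have hnz : ‖p.im‖ ≠ 0 := norm_ne_zero_iff.mpr him
    set J : Quaternion ℝ := ‖p.im‖⁻¹ • p.im with hJdef
    have hJre : J.re = 0 := by simp [hJdef, Quaternion.re_smul, Quaternion.re_im]
    have hJnorm : ‖J‖ = 1 := by
      rw [hJdef, norm_smul, Real.norm_eq_abs, abs_of_nonneg (inv_nonneg.mpr (norm_nonneg _)),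
        inv_mul_cancel₀ hnz]
    refine ⟨J, ⟨p.re, ‖p.im‖⟩, sq_of_pure hJre hJnorm, ?_, rfl, rfl⟩
    rw [sl_apply]
    show p = _ + _
    rw [hJdef, smul_smul, mul_inv_cancel₀ hnz, one_smul]
    exact (Quaternion.re_add_im p).symm

lemma f_slice (a : ℕ → ℝ) {J : Quaternion ℝ} (hJ : J^2 = -1) (z : ℂ)
    (hs : Summable (fun n : ℕ => z^n * ((a n : ℝ) : ℂ))) :
    (∑' n : ℕ, (sl J z)^n * ((a n : ℝ) : Quaternion ℝ))
      = sl J (∑' n : ℕ, z^n * ((a n : ℝ) : ℂ)) := by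
  rw [ContinuousLinearMap.map_tsum (sl J) hs]
  refine tsum_congr fun n => ?_
  rw [sl_mul hJ, sl_pow hJ, sl_coe]

lemma g_slice (a : ℕ → ℝ) {J : Quaternion ℝ} (hJ : J^2 = -1) (z : ℂ)
    (hs : Summable (fun n : ℕ => (n:ℂ) * z^(n-1) * ((a n : ℝ) : ℂ))) :
    (∑' n : ℕ, (n : ℝ) • ((sl J z)^(n-1) * ((a n : ℝ) : Quaternion ℝ)))
      = sl J (∑' n : ℕ, (n:ℂ) * z^(n-1) * ((a n : ℝ) : ℂ)) := by
  rw [ContinuousLinearMap.map_tsum (sl J) hs]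
  refine tsum_congr fun n => ?_
  have h1 : (n:ℂ) * z^(n-1) * ((a n : ℝ) : ℂ) = (n:ℝ) • (z^(n-1) * ((a n : ℝ) : ℂ)) := by
    rw [Complex.real_smul]
    push_cast
    ring
  rw [h1, ContinuousLinearMap.map_smul, sl_mul hJ, sl_pow hJ, sl_coe]

lemma conj_tsum (a : ℕ → ℝ) (z : ℂ)
    (hs : Summable (fun n : ℕ => z^n * ((a n : ℝ) : ℂ))) :
    (∑' n : ℕ, ((starRingEnd ℂ) z)^n * ((a n : ℝ) : ℂ))
      = (starRingEnd ℂ) (∑' n : ℕ, z^n * ((a n : ℝ) : ℂ)) := by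
  have h := (hs.hasSum.map (starRingEnd ℂ).toAddMonoidHom Complex.continuous_conj).tsum_eq
  simp only [RingHom.toAddMonoidHom_eq_coe, AddMonoidHom.coe_coe, Function.comp] at h
  rw [← h]
  refine tsum_congr fun n => ?_
  rw [map_mul, map_pow, Complex.conj_ofReal]

end Glue

/-- If a quaternionic power series with real coefficients converging on the unit ball has
`Re f' > 0` on one slice `B(0;1) ∩ ℂ_I`, then `Re f' > 0` on all of `B(0;1)` and `f` is
injective on `B(0;1)`. -/
theorem stmt4 (a : ℕ → ℝ)
    (hconv : ∀ q : Quaternion ℝ, ‖q‖ < 1 →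
      Summable (fun n : ℕ => q ^ n * ((a n : ℝ) : Quaternion ℝ)))
    (hconv' : ∀ q : Quaternion ℝ, ‖q‖ < 1 →
      Summable (fun n : ℕ => (n : ℝ) • (q ^ (n - 1) * ((a n : ℝ) : Quaternion ℝ))))
    (I : Quaternion ℝ) (hI : I ^ 2 = -1)
    (hpos : ∀ q : Quaternion ℝ, ‖q‖ < 1 → (∃ x y : ℝ, q = (x : Quaternion ℝ) + y • I) →
      0 < (∑' n : ℕ, (n : ℝ) • (q ^ (n - 1) * ((a n : ℝ) : Quaternion ℝ))).re) :
    (∀ q : Quaternion ℝ, ‖q‖ < 1 →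
      0 < (∑' n : ℕ, (n : ℝ) • (q ^ (n - 1) * ((a n : ℝ) : Quaternion ℝ))).re) ∧
    Set.InjOn (fun q : Quaternion ℝ => ∑' n : ℕ, q ^ n * ((a n : ℝ) : Quaternion ℝ))
      (Metric.ball (0 : Quaternion ℝ) 1) := by
  have hIu := unit_props hI
  have hP := part1 a hconv' I hI hpos
  refine ⟨hP, ?_⟩
  have hA : ∀ r : ℝ, 0 ≤ r → r < 1 → Summable (fun n : ℕ => (n:ℝ) * r^(n-1) * |a n|) :=
    fun r h0 h1 => keyA a hconv' h0 h1
  have hB : ∀ r : ℝ, 0 ≤ r → r < 1 → Summable (fun n : ℕ => r^n * |a n|) :=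
    fun r h0 h1 => keyB a hconv h0 h1
  have hsumC : ∀ z : ℂ, ‖z‖ < 1 → Summable (fun n : ℕ => z^n * ((a n : ℝ) : ℂ)) := by
    intro z hz
    apply Summable.of_norm
    have he : ∀ n : ℕ, ‖z^n * ((a n : ℝ) : ℂ)‖ = ‖z‖^n * |a n| := fun n => by
      rw [norm_mul, norm_pow, Complex.norm_real, Real.norm_eq_abs]
    rw [funext he]
    exact hB ‖z‖ (norm_nonneg z) hz
  have hsumD : ∀ z : ℂ, ‖z‖ < 1 → Summable (fun n : ℕ => (n:ℂ) * z^(n-1) * ((a n : ℝ) : ℂ)) := by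
    intro z hz
    apply Summable.of_norm
    have he : ∀ n : ℕ, ‖(n:ℂ) * z^(n-1) * ((a n : ℝ) : ℂ)‖ = (n:ℝ) * ‖z‖^(n-1) * |a n| :=
      fun n => by
        rw [norm_mul, norm_mul, norm_pow, Complex.norm_natCast, Complex.norm_real,
          Real.norm_eq_abs]
    rw [funext he]
    exact hA ‖z‖ (norm_nonneg z) hz
  have hposC : ∀ z : ℂ, ‖z‖ < 1 → 0 < (∑' n : ℕ, (n:ℂ) * z^(n-1) * ((a n : ℝ) : ℂ)).re := by
    intro z hz
    have hq : ‖sl I z‖ < 1 := by rw [sl_norm hI]; exact hz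
    have h1 := hP (sl I z) hq
    rw [g_slice a hI z (hsumD z hz), sl_re hIu.1] at h1
    exact h1
  have hinj := complex_inj a hA hB hposC
  have key : ∀ {z' w' : ℂ}, z' ∈ Metric.ball (0:ℂ) 1 → w' ∈ Metric.ball (0:ℂ) 1 →
      (∑' n : ℕ, z'^n * ((a n : ℝ) : ℂ)) = (∑' n : ℕ, w'^n * ((a n : ℝ) : ℂ)) → z' = w' :=
    fun hz hw h => hinj hz hw h
  intro p hp q hq hfeq
  rw [Metric.mem_ball, dist_zero_right] at hp hq
  obtain ⟨J, z, hJ, hpz, hzim, hzre⟩ := exists_slice p I hI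
  obtain ⟨K, w, hK, hqw, hwim, hwre⟩ := exists_slice q I hI
  have hzlt : ‖z‖ < 1 := by rw [← sl_norm hJ, ← hpz]; exact hp
  have hwlt : ‖w‖ < 1 := by rw [← sl_norm hK, ← hqw]; exact hq
  have hzmem : z ∈ Metric.ball (0:ℂ) 1 := by rw [Metric.mem_ball, dist_zero_right]; exact hzlt
  have hwmem : w ∈ Metric.ball (0:ℂ) 1 := by rw [Metric.mem_ball, dist_zero_right]; exact hwlt
  simp only at hfeq
  rw [hpz, hqw, f_slice a hJ z (hsumC z hzlt), f_slice a hK w (hsumC w hwlt)] at hfeq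
  set u : ℂ := ∑' n : ℕ, z^n * ((a n : ℝ) : ℂ) with hu
  set v : ℂ := ∑' n : ℕ, w^n * ((a n : ℝ) : ℂ) with hv
  have hre : u.re = v.re := by
    have h2 := congrArg QuaternionAlgebra.re hfeq
    rwa [sl_re (unit_props hJ).1, sl_re (unit_props hK).1] at h2
  have hsm : u.im • J = v.im • K := by
    have h2 : ((u.re : ℝ) : Quaternion ℝ) + u.im • J
        = ((v.re : ℝ) : Quaternion ℝ) + v.im • K := hfeq
    rw [hre] at h2
    exact add_left_cancel h2
  have habs : |u.im| = |v.im| := by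
    have h3 := congrArg norm hsm
    rwa [norm_smul, norm_smul, (unit_props hJ).2, (unit_props hK).2, mul_one, mul_one,
      Real.norm_eq_abs, Real.norm_eq_abs] at h3
  by_cases him : u.im = 0
  · have hvim : v.im = 0 := by rw [him] at habs; simpa using habs.symm
    have huv : u = v := Complex.ext hre (by rw [him, hvim])
    have hzw : z = w := key hzmem hwmem huv
    by_cases hz0 : z.im = 0
    · have hzc : z = ((z.re : ℝ) : ℂ) := Complex.ext rfl (by simp [hz0])
      rw [hpz, hqw, ← hzw, hzc, sl_coe, sl_coe]
    · exfalso
      have hconjmem : (starRingEnd ℂ) z ∈ Metric.ball (0:ℂ) 1 := by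
        rw [Metric.mem_ball, dist_zero_right, RCLike.norm_conj]; exact hzlt
      have hcz : (∑' n : ℕ, ((starRingEnd ℂ) z)^n * ((a n : ℝ) : ℂ))
          = ∑' n : ℕ, z^n * ((a n : ℝ) : ℂ) := by
        rw [conj_tsum a z (hsumC z hzlt), ← hu]
        exact Complex.ext rfl (by simp [him])
      have h5 := key hconjmem hzmem hcz
      have h6 := congrArg Complex.im h5
      simp only [Complex.conj_im] at h6
      exact hz0 (by linarith)
  · rcases abs_eq_abs.mp habs with heq | hneg
    · have hJK : J = K := by
        apply smul_right_injective (Quaternion ℝ) him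
        show u.im • J = u.im • K
        rw [hsm, heq]
      have huv : u = v := Complex.ext hre heq
      have hzw : z = w := key hzmem hwmem huv
      rw [hpz, hqw, hzw, hJK]
    · have hvneg : v.im = -u.im := by rw [hneg, neg_neg]
      have hJK : J = -K := by
        apply smul_right_injective (Quaternion ℝ) him
        show u.im • J = u.im • (-K)
        rw [hsm, hvneg, smul_neg, neg_smul]
      have hconjmem : (starRingEnd ℂ) z ∈ Metric.ball (0:ℂ) 1 := by
        rw [Metric.mem_ball, dist_zero_right, RCLike.norm_conj]; exact hzlt
      have hcw : (∑' n : ℕ, ((starRingEnd ℂ) z)^n * ((a n : ℝ) : ℂ))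
          = ∑' n : ℕ, w^n * ((a n : ℝ) : ℂ) := by
        rw [conj_tsum a z (hsumC z hzlt), ← hu, ← hv]
        exact (Complex.ext (by simp [hre]) (by simp [hvneg])).symm
      have hzw : (starRingEnd ℂ) z = w := key hconjmem hwmem hcw
      rw [hpz, hqw, ← hzw, hJK]
      simp only [sl_apply, Complex.conj_re, Complex.conj_im, smul_neg, neg_smul]
end

section
/- The function f(q) = -2 + 2∑_{k=1}^∞ q^k / k (a quaternionic power series converging on the open unit ball B(0;1) of ℍ) is injective on B(0;1). -/
open Quaternion

lemma aux_I (q : Quaternion ℝ) :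
    ∃ I : Quaternion ℝ, I * I = -1 ∧ ‖q.im‖ • I = q.im := by
  by_cases h : q.im = 0
  · refine ⟨⟨0,1,0,0⟩, ?_, by rw [h, norm_zero]; exact zero_smul _ _⟩
    ext <;> simp [Quaternion.re_mul, Quaternion.imI_mul, Quaternion.imJ_mul, Quaternion.imK_mul, Quaternion.ext_iff, QuaternionAlgebra.ext_iff] <;> erw [QuaternionAlgebra.mk_mul_mk] <;> simp
  · have hne : ‖q.im‖ ≠ 0 := norm_ne_zero_iff.mpr h
    refine ⟨‖q.im‖⁻¹ • q.im, ?_, by rw [smul_smul, mul_inv_cancel₀ hne, one_smul]⟩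
    rw [smul_mul_smul_comm, ← sq q.im, Quaternion.im_sq, normSq_eq_norm_mul_self,
      smul_neg, Algebra.smul_def, Quaternion.algebraMap_def, ← Quaternion.coe_mul]
    rw [show ‖q.im‖⁻¹ * ‖q.im‖⁻¹ * (‖q.im‖ * ‖q.im‖) = 1 by field_simp]
    simp

lemma aux_norm (q : Quaternion ℝ) (z : ℂ) (h1 : z.re = q.re) (h2 : z.im = ‖q.im‖) :
    ‖z‖ = ‖q‖ := by
  have hz2 : ‖z‖ ^ 2 = ‖q‖ ^ 2 := by
    rw [Complex.sq_norm, Complex.normSq_apply, h1, h2]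
    have h3 : ‖q.im‖ * ‖q.im‖ = normSq q.im := (normSq_eq_norm_mul_self _).symm
    have h4 : ‖q‖ ^ 2 = normSq q := by rw [sq, ← normSq_eq_norm_mul_self]
    rw [h3, h4]
    simp [Quaternion.normSq_def']
    ring
  rw [← Real.sqrt_sq (norm_nonneg z), hz2, Real.sqrt_sq (norm_nonneg q)]

lemma aux_hasSum_log {z : ℂ} (hz : ‖z‖ < 1) :
    HasSum (fun k : ℕ => (1 / ((k : ℝ) + 1)) • z ^ (k + 1)) (-Complex.log (1 - z)) := by
  have h := Complex.hasSum_taylorSeries_log (z := -z) (by rwa [norm_neg])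
  have h' : HasSum (fun n : ℕ => -(z ^ n / (n : ℂ))) (Complex.log (1 - z)) := by
    rw [sub_eq_add_neg]
    convert h using 2 with n
    rw [neg_pow z n, ← mul_assoc, ← pow_add]
    rw [Odd.neg_one_pow ⟨n, by ring⟩]
    ring
  have h'' : HasSum (fun n : ℕ => z ^ n / (n : ℂ)) (-Complex.log (1 - z)) := by
    simpa using h'.neg
  have h3 : HasSum (fun n : ℕ => z ^ (n + 1) / ((n + 1 : ℕ) : ℂ)) (-Complex.log (1 - z)) := by
    apply (hasSum_nat_add_iff (f := fun n : ℕ => z ^ n / (n : ℂ)) 1).mpr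
    simpa using h''
  convert h3 using 2 with k
  rw [Complex.real_smul]
  push_cast
  ring

lemma aux_key {q : Quaternion ℝ} (hq : ‖q‖ < 1) :
    NormedSpace.exp (-(∑' k : ℕ, (1 / ((k : ℝ) + 1)) • q ^ (k + 1))) = 1 - q := by
  obtain ⟨I, hI2, hIim⟩ := aux_I q
  set z : ℂ := ⟨q.re, ‖q.im‖⟩ with hzdef
  have hz : ‖z‖ = ‖q‖ := aux_norm q z rfl rfl
  have hz1 : ‖z‖ < 1 := by rwa [hz]
  set φ := Complex.liftAux I hI2 with hφdef
  have hφz : φ z = q := by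
    rw [hφdef, Complex.liftAux_apply, Quaternion.algebraMap_def]
    show (↑(q.re) : Quaternion ℝ) + ‖q.im‖ • I = q
    rw [hIim, Quaternion.re_add_im]
  have hφcont : Continuous φ := φ.toLinearMap.continuous_of_finiteDimensional
  have hH : HasSum (fun k : ℕ => (1 / ((k : ℝ) + 1)) • q ^ (k + 1))
      (φ (-Complex.log (1 - z))) := by
    have h0 := (aux_hasSum_log hz1).map φ hφcont
    convert h0 using 1
    funext k
    show _ = φ ((1 / ((k : ℝ) + 1)) • z ^ (k + 1))
    rw [map_smul, map_pow, hφz]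
  rw [hH.tsum_eq, ← map_neg φ, neg_neg, ← NormedSpace.map_exp φ hφcont]
  have hlz : NormedSpace.exp (Complex.log (1 - z)) = 1 - z := by
    rw [← Complex.exp_eq_exp_ℂ]
    apply Complex.exp_log
    intro h0
    rw [sub_eq_zero] at h0
    rw [← h0] at hz1
    simp at hz1
  rw [hlz, map_sub, map_one, hφz]

lemma aux_summable {q : Quaternion ℝ} (hq : ‖q‖ < 1) :
    Summable (fun k : ℕ => (1 / ((k : ℝ) + 1)) • q ^ (k + 1)) := by
  apply Summable.of_norm_bounded (g := fun k : ℕ => ‖q‖ ^ k * ‖q‖)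
    ((summable_geometric_of_lt_one (norm_nonneg q) hq).mul_right ‖q‖)
  intro k
  rw [norm_smul, norm_pow, ← pow_succ]
  have h1 : ‖(1 / ((k : ℝ) + 1))‖ ≤ 1 := by
    rw [Real.norm_eq_abs, abs_of_pos (by positivity)]
    rw [div_le_one (by positivity)]
    linarith [Nat.cast_nonneg (α := ℝ) k]
  calc ‖(1 / ((k : ℝ) + 1))‖ * ‖q‖ ^ (k + 1) ≤ 1 * ‖q‖ ^ (k + 1) := by
        apply mul_le_mul_of_nonneg_right h1 (by positivity)
    _ = ‖q‖ ^ (k + 1) := one_mul _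

/-- The function `f(q) = -2 + 2 ∑_{k≥1} qᵏ/k` is injective on the open unit ball of the
quaternions. -/
theorem stmt5 :
    Set.InjOn
      (fun q : Quaternion ℝ => (-2 : Quaternion ℝ) +
        ∑' k : ℕ, (2 / ((k : ℝ) + 1)) • q ^ (k + 1))
      (Metric.ball (0 : Quaternion ℝ) 1) := by
  intro p hp q hq h
  rw [mem_ball_zero_iff] at hp hq
  simp only at h
  have h2 : ∑' k : ℕ, (2 / ((k : ℝ) + 1)) • p ^ (k + 1)
      = ∑' k : ℕ, (2 / ((k : ℝ) + 1)) • q ^ (k + 1) := by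
    exact add_left_cancel h
  have key : ∀ r : Quaternion ℝ, ‖r‖ < 1 →
      ∑' k : ℕ, (2 / ((k : ℝ) + 1)) • r ^ (k + 1)
        = (2 : ℝ) • ∑' k : ℕ, (1 / ((k : ℝ) + 1)) • r ^ (k + 1) := by
    intro r hr
    rw [← ((aux_summable hr).hasSum.const_smul (2 : ℝ)).tsum_eq]
    congr 1
    funext k
    rw [smul_smul]
    congr 1
    ring
  rw [key p hp, key q hq] at h2
  have h3 : ∑' k : ℕ, (1 / ((k : ℝ) + 1)) • p ^ (k + 1)
      = ∑' k : ℕ, (1 / ((k : ℝ) + 1)) • q ^ (k + 1) :=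
    smul_right_injective (Quaternion ℝ) two_ne_zero h2
  have h4 := aux_key hp
  rw [h3, aux_key hq] at h4
  have h5 : (1 : Quaternion ℝ) - p = 1 - q := h4.symm
  simpa [sub_sub_cancel] using congrArg (fun x => (1 : Quaternion ℝ) - x) h5
end

section
/- Let f, g, w be formal power series with quaternionic coefficients, with g(0) = 0, w(0) = 0, and all coefficients of w real. Then the bullet composition is associative in this case: (f • g) • w = f • (g • w). -/
/-- The bullet composition of formal power series over the quaternions:
`(f • w) = ∑_n w^{*n} aₙ` where `f = ∑ qⁿ aₙ`; since the constant coefficient of `w` is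
required to be `0` in applications, each coefficient is a finite sum. -/
noncomputable def bulletComp (f w : PowerSeries (Quaternion ℝ)) :
    PowerSeries (Quaternion ℝ) :=
  PowerSeries.mk fun n =>
    ∑ k ∈ Finset.range (n + 1),
      PowerSeries.coeff n (w ^ k) * PowerSeries.coeff k f

namespace BulletAux

open Finset

local notation "H" => Quaternion ℝ

/-- Coefficients of `φ^k` below index `k` vanish if the constant coefficient of `φ` is zero. -/
lemma coeff_pow_eq_zero {φ : PowerSeries H} (h : PowerSeries.coeff 0 φ = 0) :
    ∀ k j, j < k → PowerSeries.coeff j (φ ^ k) = 0 := by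
  intro k
  induction k with
  | zero => intro j hj; omega
  | succ k ih =>
    intro j hj
    rw [pow_succ, PowerSeries.coeff_mul]
    apply Finset.sum_eq_zero
    rintro ⟨p, q⟩ hpq
    simp only [Finset.HasAntidiagonal.mem_antidiagonal] at hpq
    by_cases hp : p < k
    · rw [ih p hp, zero_mul]
    · have hq : q = 0 := by omega
      subst hq
      rw [h, mul_zero]

/-- Reindexing a double sum over antidiagonals as a sum over a filtered square. -/
lemma sum_range_antidiagonal {M : Type*} [AddCommMonoid M] (n : ℕ) (F : ℕ × ℕ → M) :
    ∑ k ∈ range (n + 1), ∑ p ∈ Finset.HasAntidiagonal.antidiagonal k, F p =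
      ∑ p ∈ (range (n + 1) ×ˢ range (n + 1)).filter (fun p => p.1 + p.2 ≤ n), F p := by
  rw [← Finset.sum_biUnion]
  · apply Finset.sum_congr _ (fun _ _ => rfl)
    ext p
    simp only [Finset.mem_biUnion, Finset.mem_range, Finset.HasAntidiagonal.mem_antidiagonal,
      Finset.mem_filter, Finset.mem_product]
    constructor
    · rintro ⟨k, hk, h⟩; omega
    · rintro ⟨⟨h1, h2⟩, h3⟩; exact ⟨p.1 + p.2, by omega, rfl⟩
  · intro i hi j hj hij
    simp only [Finset.disjoint_left, Finset.HasAntidiagonal.mem_antidiagonal]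
    intro p hp hp'
    omega

/-- Multiplicativity of bullet composition in the left argument, for central `w`. -/
lemma bullet_mul (a b w : PowerSeries H)
    (hw0 : PowerSeries.coeff 0 w = 0)
    (hwc : ∀ k n (x : H), Commute (PowerSeries.coeff n (w ^ k)) x) :
    bulletComp (a * b) w = bulletComp a w * bulletComp b w := by
  refine PowerSeries.ext fun n => ?_
  set C : ℕ → ℕ → H := fun k m => PowerSeries.coeff m (w ^ k) with hC
  set A : ℕ → H := fun k => PowerSeries.coeff k a with hA
  set B : ℕ → H := fun k => PowerSeries.coeff k b with hB
  have hCz : ∀ k m, m < k → C k m = 0 := fun k m hm => coeff_pow_eq_zero hw0 k m hm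
  -- common value
  have lhs_eq :
      PowerSeries.coeff n (bulletComp (a * b) w) =
        ∑ p ∈ (range (n + 1) ×ˢ range (n + 1)).filter (fun p => p.1 + p.2 ≤ n),
          C (p.1 + p.2) n * (A p.1 * B p.2) := by
    rw [bulletComp, PowerSeries.coeff_mk, ← sum_range_antidiagonal]
    apply Finset.sum_congr rfl
    intro k hk
    rw [PowerSeries.coeff_mul, Finset.mul_sum]
    apply Finset.sum_congr rfl
    rintro ⟨p, q⟩ hpq
    simp only [Finset.HasAntidiagonal.mem_antidiagonal] at hpq
    rw [hpq]
  have rhs_eq :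
      PowerSeries.coeff n (bulletComp a w * bulletComp b w) =
        ∑ p ∈ (range (n + 1) ×ˢ range (n + 1)).filter (fun p => p.1 + p.2 ≤ n),
          C (p.1 + p.2) n * (A p.1 * B p.2) := by
    rw [PowerSeries.coeff_mul]
    simp only [bulletComp, PowerSeries.coeff_mk]
    have step1 : ∀ p ∈ Finset.HasAntidiagonal.antidiagonal n,
        (∑ r ∈ range (p.1 + 1), C r p.1 * A r) * (∑ s ∈ range (p.2 + 1), C s p.2 * B s) =
          ∑ r ∈ range (n + 1), ∑ s ∈ range (n + 1), C r p.1 * C s p.2 * (A r * B s) := by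
      rintro ⟨u, v⟩ hp
      simp only [Finset.HasAntidiagonal.mem_antidiagonal] at hp
      have hsub1 : range (u + 1) ⊆ range (n + 1) := by
        apply Finset.range_subset_range.2; omega
      have hsub2 : range (v + 1) ⊆ range (n + 1) := by
        apply Finset.range_subset_range.2; omega
      rw [Finset.sum_subset hsub1 (by
        intro r _ hr
        simp only [Finset.mem_range] at hr
        rw [hCz r u (by omega), zero_mul]),
        Finset.sum_subset hsub2 (by
        intro s _ hs
        simp only [Finset.mem_range] at hs
        rw [hCz s v (by omega), zero_mul]),
        Finset.sum_mul_sum]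
      apply Finset.sum_congr rfl
      intro r _
      apply Finset.sum_congr rfl
      intro s _
      have hcom : A r * C s v = C s v * A r := ((hwc s v) (A r)).symm
      calc C r u * A r * (C s v * B s)
          = C r u * (A r * C s v) * B s := by noncomm_ring
        _ = C r u * (C s v * A r) * B s := by rw [hcom]
        _ = C r u * C s v * (A r * B s) := by noncomm_ring
    rw [Finset.sum_congr rfl step1, Finset.sum_comm]
    have step2 : ∀ r ∈ range (n + 1),
        (∑ p ∈ Finset.HasAntidiagonal.antidiagonal n, ∑ s ∈ range (n + 1), C r p.1 * C s p.2 * (A r * B s)) =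
          ∑ s ∈ range (n + 1), C (r + s) n * (A r * B s) := by
      intro r _
      rw [Finset.sum_comm]
      apply Finset.sum_congr rfl
      intro s _
      rw [← Finset.sum_mul]
      congr 1
      rw [hC]
      simp only
      rw [← PowerSeries.coeff_mul, ← pow_add]
    rw [Finset.sum_congr rfl step2, ← Finset.sum_product']
    refine (Finset.sum_subset (Finset.filter_subset _ _) ?_).symm
    rintro ⟨r, s⟩ hmem hns
    simp only [Finset.mem_product, Finset.mem_range] at hmem
    simp only [Finset.mem_filter, Finset.mem_product, not_and, Finset.mem_range] at hns
    have hrs : n < r + s := by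
      by_contra h
      exact hns ⟨(by omega), (by omega)⟩ (by omega)
    rw [hCz (r + s) n hrs, zero_mul]
  rw [lhs_eq, rhs_eq]

lemma coeff_bullet (f w : PowerSeries H) (n : ℕ) :
    PowerSeries.coeff n (bulletComp f w) =
      ∑ k ∈ Finset.range (n + 1),
        PowerSeries.coeff n (w ^ k) * PowerSeries.coeff k f :=
  PowerSeries.coeff_mk _ _

/-- `bulletComp 1 w = 1`. -/
lemma bullet_one (w : PowerSeries H) : bulletComp 1 w = 1 := by
  refine PowerSeries.ext fun n => ?_
  rw [bulletComp, PowerSeries.coeff_mk]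
  have : ∀ k ∈ Finset.range (n + 1),
      PowerSeries.coeff n (w ^ k) * PowerSeries.coeff k (1 : PowerSeries H) =
        if k = 0 then PowerSeries.coeff n (w ^ k) else 0 := by
    intro k _
    rw [PowerSeries.coeff_one]
    split <;> simp
  rw [Finset.sum_congr rfl this, Finset.sum_ite_eq' (Finset.range (n + 1)) 0]
  simp

/-- `bulletComp (g^k) w = (bulletComp g w)^k` for central `w`. -/
lemma bullet_pow (g w : PowerSeries H)
    (hw0 : PowerSeries.coeff 0 w = 0)
    (hwc : ∀ k n (x : H), Commute (PowerSeries.coeff n (w ^ k)) x) :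
    ∀ k, bulletComp (g ^ k) w = (bulletComp g w) ^ k := by
  intro k
  induction k with
  | zero => simpa using bullet_one w
  | succ k ih => rw [pow_succ, pow_succ, bullet_mul _ _ _ hw0 hwc, ih]

end BulletAux

/-- Associativity of bullet composition when the innermost series `w` has real coefficients:
`(f • g) • w = f • (g • w)`. -/
theorem stmt9 (f g w : PowerSeries (Quaternion ℝ))
    (hg0 : PowerSeries.coeff 0 g = 0)
    (hw0 : PowerSeries.coeff 0 w = 0)
    (hwreal : ∀ n : ℕ, ∃ r : ℝ, PowerSeries.coeff n w = (r : Quaternion ℝ)) :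
    bulletComp (bulletComp f g) w = bulletComp f (bulletComp g w) := by
  classical
  -- `w` is the image of a real power series, hence its coefficients are central.
  obtain ⟨W, hW⟩ : ∃ W : PowerSeries ℝ, w = PowerSeries.map (algebraMap ℝ (Quaternion ℝ)) W := by
    refine ⟨PowerSeries.mk fun n => (hwreal n).choose, ?_⟩
    refine PowerSeries.ext fun n => ?_
    rw [PowerSeries.coeff_map, PowerSeries.coeff_mk]
    exact ((hwreal n).choose_spec).trans rfl
  have hwc : ∀ k n (x : Quaternion ℝ),
      Commute (PowerSeries.coeff n (w ^ k)) x := by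
    intro k n x
    rw [hW, ← map_pow, PowerSeries.coeff_map]
    exact Algebra.commutes _ _
  refine PowerSeries.ext fun n => ?_
  -- expand both sides
  rw [BulletAux.coeff_bullet (bulletComp f g) w, BulletAux.coeff_bullet f (bulletComp g w)]
  have hgz : ∀ k j, j < k → PowerSeries.coeff j (g ^ k) = 0 :=
    BulletAux.coeff_pow_eq_zero hg0
  -- left side: extend inner ranges, swap sums
  have step1 : ∀ j ∈ Finset.range (n + 1),
      PowerSeries.coeff n (w ^ j) *
          PowerSeries.coeff j (bulletComp f g) =
        ∑ k ∈ Finset.range (n + 1),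
          PowerSeries.coeff n (w ^ j) *
            (PowerSeries.coeff j (g ^ k) *
              PowerSeries.coeff k f) := by
    intro j hj
    rw [Finset.mem_range] at hj
    rw [BulletAux.coeff_bullet, Finset.mul_sum]
    refine (Finset.sum_subset (Finset.range_subset_range.2 (by omega)) ?_)
    intro k _ hk
    rw [Finset.mem_range] at hk
    rw [hgz k j (by omega), zero_mul, mul_zero]
  rw [Finset.sum_congr rfl step1, Finset.sum_comm]
  refine Finset.sum_congr rfl fun k _ => ?_
  rw [← BulletAux.bullet_pow g w hw0 hwc k, BulletAux.coeff_bullet, Finset.sum_mul]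
  refine Finset.sum_congr rfl fun j _ => ?_
  rw [mul_assoc]
end

section
/- Bullet composition fails to be associative in general: taking f(q) = q² c, g(q) = q a, w(q) = q² b with quaternions a, b, c, one has ((f • g) • w)(q) = q⁴ b² a² c while (f • (g • w))(q) = q⁴ (bab a) c; in particular, there exist quaternions a, b, c for which (f • g) • w ≠ f • (g • w). -/
lemma monomial_pow_ps (d : ℕ) (b : Quaternion ℝ) (k : ℕ) :
    (PowerSeries.monomial d b) ^ k
      = PowerSeries.monomial (d * k) (b ^ k) := by
  induction k with
  | zero => simp
  | succ n ih =>
      rw [pow_succ, ih]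
      have h := MvPowerSeries.monomial_mul_monomial (R := Quaternion ℝ)
        (Finsupp.single () (d * n)) (Finsupp.single () d) (b ^ n) b
      rw [← Finsupp.single_add] at h
      simpa [PowerSeries.monomial, pow_succ, Nat.mul_succ] using h

lemma bulletComp_monomial (m d : ℕ) (hd : 1 ≤ d) (c b : Quaternion ℝ) :
    bulletComp (PowerSeries.monomial m c)
        (PowerSeries.monomial d b)
      = PowerSeries.monomial (d * m) (b ^ m * c) := by
  apply PowerSeries.ext
  intro n
  rw [bulletComp, PowerSeries.coeff_mk, Finset.sum_eq_single m]
  · simp only [monomial_pow_ps, PowerSeries.coeff_monomial]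
    by_cases h : n = d * m <;> simp [h, mul_assoc]
  · intro k _ hk
    simp [PowerSeries.coeff_monomial, hk]
  · intro hm
    simp only [Finset.mem_range, not_lt] at hm
    have hne : n ≠ d * m := by nlinarith
    simp [monomial_pow_ps, PowerSeries.coeff_monomial, hne]


/-- Non-associativity of bullet composition: with `f = q² c`, `g = q a`, `w = q² b` one has
`(f • g) • w = q⁴ b² a² c` and `f • (g • w) = q⁴ (b a b a) c`, and these differ for suitable
quaternions `a`, `b`, `c`. -/
theorem stmt10 :
    (∀ a b c : Quaternion ℝ,
      bulletComp (bulletComp (PowerSeries.monomial 2 c)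
          (PowerSeries.monomial 1 a)) (PowerSeries.monomial 2 b)
        = PowerSeries.monomial 4 (b ^ 2 * a ^ 2 * c) ∧
      bulletComp (PowerSeries.monomial 2 c)
          (bulletComp (PowerSeries.monomial 1 a)
            (PowerSeries.monomial 2 b))
        = PowerSeries.monomial 4 (b * a * b * a * c)) ∧
    ∃ a b c : Quaternion ℝ,
      bulletComp (bulletComp (PowerSeries.monomial 2 c)
          (PowerSeries.monomial 1 a)) (PowerSeries.monomial 2 b)
        ≠ bulletComp (PowerSeries.monomial 2 c)
          (bulletComp (PowerSeries.monomial 1 a)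
            (PowerSeries.monomial 2 b)) := by
  have key : ∀ a b c : Quaternion ℝ,
      bulletComp (bulletComp (PowerSeries.monomial 2 c)
          (PowerSeries.monomial 1 a)) (PowerSeries.monomial 2 b)
        = PowerSeries.monomial 4 (b ^ 2 * a ^ 2 * c) ∧
      bulletComp (PowerSeries.monomial 2 c)
          (bulletComp (PowerSeries.monomial 1 a)
            (PowerSeries.monomial 2 b))
        = PowerSeries.monomial 4 (b * a * b * a * c) := by
    intro a b c
    constructor
    · rw [bulletComp_monomial 2 1 le_rfl c a]
      norm_num
      rw [bulletComp_monomial 2 2 one_le_two (a ^ 2 * c) b]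
      norm_num [mul_assoc]
    · rw [bulletComp_monomial 1 2 one_le_two a b]
      norm_num
      rw [bulletComp_monomial 2 2 one_le_two c (b * a)]
      norm_num
      congr 1
      rw [pow_two]
      noncomm_ring
  refine ⟨key, ⟨0,1,0,0⟩, ⟨0,0,1,0⟩, 1, ?_⟩
  rw [(key ⟨0,1,0,0⟩ ⟨0,0,1,0⟩ 1).1, (key ⟨0,1,0,0⟩ ⟨0,0,1,0⟩ 1).2]
  intro h
  have h2 := congrArg (PowerSeries.coeff 4) h
  simp only [PowerSeries.coeff_monomial_same] at h2
  set i : Quaternion ℝ := ⟨0,1,0,0⟩ with hi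
  set j : Quaternion ℝ := ⟨0,0,1,0⟩ with hj
  have h1 : i.re = 0 ∧ i.imI = 1 ∧ i.imJ = 0 ∧ i.imK = 0 := ⟨rfl, rfl, rfl, rfl⟩
  have h3 : j.re = 0 ∧ j.imI = 0 ∧ j.imJ = 1 ∧ j.imK = 0 := ⟨rfl, rfl, rfl, rfl⟩
  clear_value i j
  rw [Quaternion.ext_iff] at h2
  simp only [pow_two, mul_one, h1, h3, Quaternion.re_mul, Quaternion.imI_mul, Quaternion.imJ_mul,
    Quaternion.imK_mul] at h2
  norm_num at h2
end

section
/- Let f, g be quaternionic power series converging on B(0;1), and suppose f(q) = g(w(q)) for some power series w with real coefficients, w(0)=0, and ‖w(q)‖ < 1 on B(0;1) (i.e., f ≺_𝒩 g). Then f(0) = g(0) and ‖f'(0)‖ ≤ ‖g'(0)‖. -/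
open Metric Quaternion

lemma aux_hasFPowerSeries {𝕜 : Type*} [NontriviallyNormedField 𝕜] {E : Type*}
    [NormedAddCommGroup E] [NormedSpace 𝕜 E] [CompleteSpace E] (v : ℕ → E)
    (hb : ∀ r : ℝ, 0 ≤ r → r < 1 → ∃ C, ∀ n, ‖v n‖ * r ^ n ≤ C) :
    HasFPowerSeriesOnBall (fun t : 𝕜 => ∑' n, t ^ n • v n)
      (fun n => ContinuousMultilinearMap.mkPiRing 𝕜 (Fin n) (v n)) 0 1 := by
  set p : FormalMultilinearSeries 𝕜 𝕜 E :=
    fun n => ContinuousMultilinearMap.mkPiRing 𝕜 (Fin n) (v n) with hp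
  have hrad : 1 ≤ p.radius := by
    refine ENNReal.le_of_forall_nnreal_lt fun r hr => ?_
    have hr1 : (r : ℝ) < 1 := by exact_mod_cast hr
    obtain ⟨C, hC⟩ := hb r r.coe_nonneg hr1
    exact p.le_radius_of_bound C fun n => by
      simpa [hp, ContinuousMultilinearMap.norm_mkPiRing] using hC n
  refine ⟨hrad, one_pos, fun {y} hy => ?_⟩
  rw [EMetric.mem_ball, edist_zero_right] at hy
  have hy' : y ∈ Metric.eball (0 : 𝕜) p.radius := by
    rw [EMetric.mem_ball, edist_zero_right]; exact lt_of_lt_of_le hy hrad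
  have hs := p.summable hy'
  have : (fun n : ℕ => p n fun _ => y) = fun n => y ^ n • v n := by
    funext n
    simp [hp, ContinuousMultilinearMap.mkPiRing_apply]
  rw [this] at hs ⊢
  simpa using hs.hasSum

lemma aux_hasSum {𝕜 : Type*} [NontriviallyNormedField 𝕜] {E : Type*}
    [NormedAddCommGroup E] [NormedSpace 𝕜 E] [CompleteSpace E] (v : ℕ → E)
    (hb : ∀ r : ℝ, 0 ≤ r → r < 1 → ∃ C, ∀ n, ‖v n‖ * r ^ n ≤ C)
    (y : 𝕜) (hy : ‖y‖ < 1) :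
    HasSum (fun n => y ^ n • v n) (∑' n, y ^ n • v n) := by
  have hmem : y ∈ Metric.eball (0 : 𝕜) 1 := by
    rw [mem_emetric_ball_zero_iff]
    rw [← ofReal_norm]; exact ENNReal.ofReal_lt_one.mpr hy
  have h := (aux_hasFPowerSeries v hb).hasSum hmem
  simpa [ContinuousMultilinearMap.mkPiRing_apply] using h

lemma exists_bound {E : Type*} [NormedAddCommGroup E] (f : ℕ → E) (h : Summable f) :
    ∃ C, ∀ n, ‖f n‖ ≤ C := by
  have h0 := h.tendsto_atTop_zero.norm
  simp only [norm_zero] at h0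
  obtain ⟨C, hC⟩ := h0.bddAbove_range
  exact ⟨C, fun n => hC ⟨n, rfl⟩⟩

noncomputable def qI : Quaternion ℝ := ⟨0, 1, 0, 0⟩

lemma qI_mul_qI : qI * qI = -1 := by
  ext <;> simp [qI] <;> erw [QuaternionAlgebra.mk_mul_mk] <;> simp

noncomputable def φq : ℂ →ₐ[ℝ] Quaternion ℝ := Complex.liftAux qI qI_mul_qI

lemma φq_apply (z : ℂ) : φq z = ⟨z.re, z.im, 0, 0⟩ := by
  rw [φq, Complex.liftAux_apply]
  ext <;> simp [qI, Quaternion.algebraMap_def] <;> erw [QuaternionAlgebra.smul_mk] <;> simp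

lemma norm_φq (z : ℂ) : ‖φq z‖ = ‖z‖ := by
  rw [φq_apply]
  erw [norm_eq_sqrt_real_inner, Quaternion.inner_self]
  rw [Complex.norm_def]
  congr 1
  erw [Quaternion.normSq_def']
  simp [Quaternion.normSq_def', Complex.normSq_apply]
  ring

lemma φq_continuous : Continuous φq :=
  φq.toLinearMap.continuous_of_finiteDimensional

/-- Subordination: if `f(q) = ∑ qⁿ aₙ` and `g(q) = ∑ qⁿ bₙ` converge on the unit ball and
`f = g ∘ w` for a power series `w` with real coefficients, `w(0) = 0`, `‖w(q)‖ < 1` on the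
ball, then `f(0) = g(0)` and `‖f'(0)‖ ≤ ‖g'(0)‖`, i.e. `a₀ = b₀` and `‖a₁‖ ≤ ‖b₁‖`. -/
theorem stmt16 (a b : ℕ → Quaternion ℝ)
    (hfa : ∀ q : Quaternion ℝ, ‖q‖ < 1 → Summable (fun n : ℕ => q ^ n * a n))
    (hgb : ∀ q : Quaternion ℝ, ‖q‖ < 1 → Summable (fun n : ℕ => q ^ n * b n))
    (c : ℕ → ℝ) (hc0 : c 0 = 0)
    (hw : ∀ q : Quaternion ℝ, ‖q‖ < 1 → Summable (fun n : ℕ => c n • q ^ n))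
    (hwlt : ∀ q : Quaternion ℝ, ‖q‖ < 1 → ‖∑' n : ℕ, c n • q ^ n‖ < 1)
    (hsub : ∀ q : Quaternion ℝ, ‖q‖ < 1 →
      (∑' n : ℕ, q ^ n * a n) = ∑' n : ℕ, (∑' m : ℕ, c m • q ^ m) ^ n * b n) :
    a 0 = b 0 ∧ ‖a 1‖ ≤ ‖b 1‖ := by
  -- bounds
  have hnormr : ∀ r : ℝ, 0 ≤ r → ‖((r : ℝ) : Quaternion ℝ)‖ = r := fun r hr => by
    rw [Quaternion.norm_coe, Real.norm_eq_abs, abs_of_nonneg hr]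
  have boundA : ∀ r : ℝ, 0 ≤ r → r < 1 → ∃ C, ∀ n, ‖a n‖ * r ^ n ≤ C := by
    intro r hr0 hr1
    obtain ⟨C, hC⟩ := exists_bound _ (hfa ((r : ℝ) : Quaternion ℝ) (by rw [hnormr r hr0]; exact hr1))
    refine ⟨C, fun n => ?_⟩
    have := hC n
    rwa [norm_mul, norm_pow, hnormr r hr0, mul_comm] at this
  have boundB : ∀ r : ℝ, 0 ≤ r → r < 1 → ∃ C, ∀ n, ‖b n‖ * r ^ n ≤ C := by
    intro r hr0 hr1
    obtain ⟨C, hC⟩ := exists_bound _ (hgb ((r : ℝ) : Quaternion ℝ) (by rw [hnormr r hr0]; exact hr1))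
    refine ⟨C, fun n => ?_⟩
    have := hC n
    rwa [norm_mul, norm_pow, hnormr r hr0, mul_comm] at this
  have boundC : ∀ r : ℝ, 0 ≤ r → r < 1 → ∃ C, ∀ n, ‖c n‖ * r ^ n ≤ C := by
    intro r hr0 hr1
    obtain ⟨C, hC⟩ := exists_bound _ (hw ((r : ℝ) : Quaternion ℝ) (by rw [hnormr r hr0]; exact hr1))
    refine ⟨C, fun n => ?_⟩
    have := hC n
    rwa [norm_smul, norm_pow, hnormr r hr0] at this
  have boundCc : ∀ r : ℝ, 0 ≤ r → r < 1 → ∃ C, ∀ n, ‖((c n : ℂ))‖ * r ^ n ≤ C := by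
    intro r hr0 hr1
    obtain ⟨C, hC⟩ := boundC r hr0 hr1
    exact ⟨C, fun n => by simpa using hC n⟩
  -- part 1 : a 0 = b 0
  have h00 : ‖(0 : Quaternion ℝ)‖ < 1 := by simp
  have hW0 : (∑' m : ℕ, c m • (0 : Quaternion ℝ) ^ m) = 0 := by
    rw [tsum_eq_single 0 (fun n hn => by simp [zero_pow hn])]
    simp [hc0]
  have h1 : a 0 = b 0 := by
    have := hsub 0 h00
    rw [hW0] at this
    rw [tsum_eq_single 0 (fun n hn => by simp [zero_pow hn]),
        tsum_eq_single 0 (fun n hn => by simp [zero_pow hn])] at this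
    simpa using this
  -- power series
  have hF := aux_hasFPowerSeries (𝕜 := ℝ) a boundA
  have hG := aux_hasFPowerSeries (𝕜 := ℝ) b boundB
  have hWr := aux_hasFPowerSeries (𝕜 := ℝ) c boundC
  have hWc := aux_hasFPowerSeries (𝕜 := ℂ) (fun n => ((c n : ℂ))) boundCc
  set F : ℝ → Quaternion ℝ := fun t => ∑' n, t ^ n • a n with hFdef
  set G : ℝ → Quaternion ℝ := fun t => ∑' n, t ^ n • b n with hGdef
  set W : ℝ → ℝ := fun t => ∑' n, t ^ n • c n with hWdef
  -- W 0 = 0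
  have hWzero : W 0 = 0 := by
    rw [hWdef]
    simp only
    rw [tsum_eq_single 0 (fun n hn => by simp [zero_pow hn])]
    simp [hc0]
  -- F = G ∘ W on the ball
  have key : ∀ t : ℝ, ‖t‖ < 1 → F t = G (W t) := by
    intro t ht
    have hqt : ‖((t : ℝ) : Quaternion ℝ)‖ < 1 := by rwa [Quaternion.norm_coe]
    have hq := hsub ((t : ℝ) : Quaternion ℝ) hqt
    -- LHS
    have hL : (∑' n : ℕ, ((t : ℝ) : Quaternion ℝ) ^ n * a n) = F t := by
      refine tsum_congr fun n => ?_
      rw [← Quaternion.coe_pow, Quaternion.coe_mul_eq_smul]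
    -- W coincides
    have hWsum : HasSum (fun n => t ^ n • c n) (W t) := aux_hasSum c boundC t ht
    have hWq : (∑' m : ℕ, c m • ((t : ℝ) : Quaternion ℝ) ^ m) = ((W t : ℝ) : Quaternion ℝ) := by
      have hmap := hWsum.map (algebraMap ℝ (Quaternion ℝ))
        (continuous_algebraMap ℝ (Quaternion ℝ))
      have heq : (fun n => algebraMap ℝ (Quaternion ℝ) (t ^ n • c n)) =
          fun m => c m • ((t : ℝ) : Quaternion ℝ) ^ m := by
        funext m
        rw [Quaternion.algebraMap_def, ← Quaternion.coe_pow, Quaternion.smul_coe,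
          smul_eq_mul, mul_comm]
      simp only [Function.comp_def] at hmap
      rw [heq] at hmap
      rw [hmap.tsum_eq, Quaternion.algebraMap_def]
    rw [hL, hWq] at hq
    have hR : (∑' n : ℕ, ((W t : ℝ) : Quaternion ℝ) ^ n * b n) = G (W t) := by
      refine tsum_congr fun n => ?_
      rw [← Quaternion.coe_pow, Quaternion.coe_mul_eq_smul]
    rw [hR] at hq
    exact hq
  -- derivatives
  have hderivF : HasDerivAt F (a 1) 0 := by
    have := hF.hasFPowerSeriesAt.hasDerivAt
    simpa [ContinuousMultilinearMap.mkPiRing_apply] using this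
  have hderivG : HasDerivAt G (b 1) 0 := by
    have := hG.hasFPowerSeriesAt.hasDerivAt
    simpa [ContinuousMultilinearMap.mkPiRing_apply] using this
  have hderivW : HasDerivAt W (c 1) 0 := by
    have := hWr.hasFPowerSeriesAt.hasDerivAt
    simpa [ContinuousMultilinearMap.mkPiRing_apply] using this
  have hderivG' : HasDerivAt G (b 1) (W 0) := by rwa [hWzero]
  have hcomp : HasDerivAt (G ∘ W) (c 1 • b 1) 0 := hderivG'.scomp 0 hderivW
  have heventually : F =ᶠ[nhds (0 : ℝ)] G ∘ W := by
    filter_upwards [Metric.ball_mem_nhds (0 : ℝ) one_pos] with t ht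
    exact key t (by simpa [Real.norm_eq_abs] using mem_ball_zero_iff.mp ht)
  have hcomp' : HasDerivAt F (c 1 • b 1) 0 := hcomp.congr_of_eventuallyEq heventually
  have ha1 : a 1 = c 1 • b 1 := hderivF.unique hcomp'
  -- Schwarz lemma for Wc
  set Wc : ℂ → ℂ := fun z => ∑' n, z ^ n • ((c n : ℂ)) with hWcdef
  have hball : Metric.eball (0 : ℂ) 1 = Metric.ball (0 : ℂ) 1 := by
    simpa using Metric.eball_coe (x := (0:ℂ)) (ε := 1)
  have hdiff : DifferentiableOn ℂ Wc (Metric.ball (0 : ℂ) 1) := by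
    have := hWc.differentiableOn
    rwa [hball] at this
  have hWcnorm : ∀ z : ℂ, ‖z‖ < 1 → ‖Wc z‖ < 1 := by
    intro z hz
    have hs : HasSum (fun n => z ^ n • ((c n : ℂ))) (Wc z) :=
      aux_hasSum _ boundCc z hz
    have hmap := hs.map φq φq_continuous
    have heq : (fun n => φq (z ^ n • ((c n : ℂ)))) = fun n => c n • (φq z) ^ n := by
      funext n
      have h1 : z ^ n • ((c n : ℂ)) = c n • z ^ n := by
        rw [smul_eq_mul, Complex.real_smul, mul_comm]
      rw [h1, map_smul, map_pow]
    simp only [Function.comp_def] at hmap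
    rw [heq] at hmap
    have hφz : ‖φq z‖ < 1 := by rwa [norm_φq]
    have := hwlt (φq z) hφz
    rw [hmap.tsum_eq] at this
    rwa [norm_φq] at this
  have hmaps : Set.MapsTo Wc (Metric.ball (0 : ℂ) 1) (Metric.ball (0 : ℂ) 1) := by
    intro z hz
    rw [mem_ball_zero_iff] at hz ⊢
    exact hWcnorm z hz
  have hWc0 : Wc 0 = 0 := by
    rw [hWcdef]
    simp only
    rw [tsum_eq_single 0 (fun n hn => by simp [zero_pow hn])]
    simp [hc0]
  have hschwarz := Complex.norm_deriv_le_one_of_mapsTo_ball hdiff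
    (by rw [hWc0]; exact hmaps.mono_right ball_subset_closedBall) one_pos
  have hderivWc : deriv Wc 0 = ((c 1 : ℂ)) := by
    rw [hWc.hasFPowerSeriesAt.deriv]
    simp [ContinuousMultilinearMap.mkPiRing_apply]
  rw [hderivWc, Complex.norm_real, Real.norm_eq_abs] at hschwarz
  -- conclusion
  refine ⟨h1, ?_⟩
  rw [ha1, norm_smul, Real.norm_eq_abs]
  calc |c 1| * ‖b 1‖ ≤ 1 * ‖b 1‖ := by
        exact mul_le_mul_of_nonneg_right hschwarz (norm_nonneg _)
    _ = ‖b 1‖ := one_mul _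
end

section
/- Let f(q) = ∑_{n=0}^∞ q^n a_n be a quaternionic power series converging on B(0;1), with f(0)=0, f'(0)=1, and all coefficients a_n real. If f is injective on B(0;1) and its image f(B(0;1)∩ℂ_I) (for any/each imaginary unit I) is a starlike subset of ℂ_I, then f(B(0;1)) is a starlike subset of ℍ: for every t ∈ [0,1] and every q ∈ B(0;1) there exists p ∈ B(0;1) with t·f(q) = f(p). -/
open Quaternion Complex

theorem aux_re_normSq (J : Quaternion ℝ) (hJ : J * J = -1) :
    J.re = 0 ∧ Quaternion.normSq J = 1 := by
  have h1 := congrArg QuaternionAlgebra.re hJ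
  have h2 := congrArg QuaternionAlgebra.imI hJ
  have h3 := congrArg QuaternionAlgebra.imJ hJ
  have h4 := congrArg QuaternionAlgebra.imK hJ
  simp only [Quaternion.re_mul, Quaternion.imI_mul, Quaternion.imJ_mul, Quaternion.imK_mul,
    Quaternion.re_neg, Quaternion.imI_neg, Quaternion.imJ_neg, Quaternion.imK_neg,
    Quaternion.re_one, Quaternion.imI_one, Quaternion.imJ_one, Quaternion.imK_one,
    neg_zero] at h1 h2 h3 h4
  have hre : J.re = 0 := by
    by_contra h
    have hi : J.imI = 0 := by
      have : J.re * J.imI = 0 := by linear_combination h2 / 2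
      exact (mul_eq_zero.1 this).resolve_left h
    have hj : J.imJ = 0 := by
      have : J.re * J.imJ = 0 := by linear_combination h3 / 2
      exact (mul_eq_zero.1 this).resolve_left h
    have hk : J.imK = 0 := by
      have : J.re * J.imK = 0 := by linear_combination h4 / 2
      exact (mul_eq_zero.1 this).resolve_left h
    rw [hi, hj, hk] at h1
    nlinarith [sq_nonneg J.re]
  refine ⟨hre, ?_⟩
  rw [Quaternion.normSq_def']
  rw [hre] at h1 ⊢
  nlinarith

theorem aux_norm_lift (J : Quaternion ℝ) (hJ : J * J = -1) (z : ℂ) :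
    ‖Complex.liftAux J hJ z‖ = ‖z‖ := by
  obtain ⟨hre, hns⟩ := aux_re_normSq J hJ
  have h : Quaternion.normSq (Complex.liftAux J hJ z) = Complex.normSq z := by
    rw [Complex.liftAux_apply]
    rw [Quaternion.normSq_def'] at hns ⊢
    simp only [Quaternion.re_add, Quaternion.imI_add, Quaternion.imJ_add, Quaternion.imK_add,
      Quaternion.re_smul, Quaternion.imI_smul, Quaternion.imJ_smul, Quaternion.imK_smul,
      Quaternion.algebraMap_def, Quaternion.re_coe, Quaternion.imI_coe, Quaternion.imJ_coe, Quaternion.imK_coe,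
      smul_eq_mul, hre, Complex.normSq_apply, mul_zero, add_zero, zero_add]
    linear_combination z.im ^ 2 * hns - z.im ^ 2 * J.re * hre
  have h1 : ‖Complex.liftAux J hJ z‖ * ‖Complex.liftAux J hJ z‖ = ‖z‖ * ‖z‖ := by
    rw [← Quaternion.normSq_eq_norm_mul_self, h, Complex.normSq_eq_norm_sq, sq]
  exact (mul_self_inj (norm_nonneg _) (norm_nonneg _)).1 h1

theorem aux_inj (J : Quaternion ℝ) (hJ : J * J = -1) : Function.Injective (Complex.liftAux J hJ) := by
  intro u v h
  have : ‖u - v‖ = 0 := by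
    rw [← aux_norm_lift J hJ, map_sub, h, sub_self, norm_zero]
  simpa [sub_eq_zero] using norm_eq_zero.1 this

theorem aux_summable_s17 (a : ℕ → ℝ)
    (hconv : ∀ q : Quaternion ℝ, ‖q‖ < 1 → Summable (fun n : ℕ => a n • q ^ n))
    (J : Quaternion ℝ) (hJ : J * J = -1) (z : ℂ) (hz : ‖z‖ < 1) :
    Summable (fun n : ℕ => a n • z ^ n) := by
  have h1 : Summable (fun n : ℕ => a n • (Complex.liftAux J hJ z) ^ n) :=
    hconv _ (by rwa [aux_norm_lift])
  rw [← summable_norm_iff] at h1 ⊢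
  convert h1 using 2 with n
  rw [norm_smul, norm_smul, norm_pow, norm_pow, aux_norm_lift]

theorem aux_f_lift (a : ℕ → ℝ)
    (hconv : ∀ q : Quaternion ℝ, ‖q‖ < 1 → Summable (fun n : ℕ => a n • q ^ n))
    (f : Quaternion ℝ → Quaternion ℝ)
    (hfdef : ∀ q : Quaternion ℝ, ‖q‖ < 1 → f q = ∑' n : ℕ, a n • q ^ n)
    (J : Quaternion ℝ) (hJ : J * J = -1) (z : ℂ) (hz : ‖z‖ < 1) :
    f (Complex.liftAux J hJ z) = Complex.liftAux J hJ (∑' n : ℕ, a n • z ^ n) := by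
  have hnz : ‖Complex.liftAux J hJ z‖ < 1 := by rwa [aux_norm_lift]
  rw [hfdef _ hnz]
  have hs := aux_summable_s17 a hconv J hJ z hz
  let L : ℂ →L[ℝ] Quaternion ℝ := LinearMap.toContinuousLinearMap (Complex.liftAux J hJ).toLinearMap
  have hL : ∀ w : ℂ, L w = Complex.liftAux J hJ w := fun w => rfl
  rw [show Complex.liftAux J hJ (∑' n : ℕ, a n • z ^ n) = L (∑' n : ℕ, a n • z ^ n) from rfl,
    ContinuousLinearMap.map_tsum L hs]
  exact tsum_congr fun n => by rw [map_smul, hL, map_pow]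

theorem aux_decomp (I : Quaternion ℝ) (hI : I * I = -1) (q : Quaternion ℝ) :
    ∃ (J : Quaternion ℝ) (hJ : J * J = -1) (z : ℂ), q = Complex.liftAux J hJ z := by
  by_cases h : q.imI = 0 ∧ q.imJ = 0 ∧ q.imK = 0
  · refine ⟨I, hI, (q.re : ℂ), ?_⟩
    rw [Complex.liftAux_apply]
    simp only [Complex.ofReal_re, Complex.ofReal_im, zero_smul, add_zero,
      Quaternion.algebraMap_def]
    ext
    · simp
    · simp [h.1]
    · simp [h.2.1]
    · simp [h.2.2]
  · set s : ℝ := Real.sqrt (q.imI ^ 2 + q.imJ ^ 2 + q.imK ^ 2) with hs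
    have hsum : 0 < q.imI ^ 2 + q.imJ ^ 2 + q.imK ^ 2 := by
      rcases not_and_or.1 h with h1 | h1
      · nlinarith [sq_nonneg q.imJ, sq_nonneg q.imK, sq_nonneg q.imI, pow_pos (abs_pos.2 h1) 2,
          _root_.sq_abs q.imI]
      rcases not_and_or.1 h1 with h2 | h2
      · nlinarith [sq_nonneg q.imJ, sq_nonneg q.imK, sq_nonneg q.imI, _root_.sq_abs q.imJ,
          pow_pos (abs_pos.2 h2) 2]
      · nlinarith [sq_nonneg q.imJ, sq_nonneg q.imK, sq_nonneg q.imI, _root_.sq_abs q.imK,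
          pow_pos (abs_pos.2 h2) 2]
    have hspos : 0 < s := Real.sqrt_pos.2 hsum
    have hssq : s ^ 2 = q.imI ^ 2 + q.imJ ^ 2 + q.imK ^ 2 := Real.sq_sqrt hsum.le
    refine ⟨⟨0, q.imI / s, q.imJ / s, q.imK / s⟩, ?_, ⟨q.re, s⟩, ?_⟩
    · ext <;>
        simp only [Quaternion.re_mul (R := ℝ) ⟨0, q.imI / s, q.imJ / s, q.imK / s⟩ ⟨0, q.imI / s, q.imJ / s, q.imK / s⟩, Quaternion.imI_mul (R := ℝ) ⟨0, q.imI / s, q.imJ / s, q.imK / s⟩ ⟨0, q.imI / s, q.imJ / s, q.imK / s⟩, Quaternion.imJ_mul (R := ℝ) ⟨0, q.imI / s, q.imJ / s, q.imK / s⟩ ⟨0, q.imI / s, q.imJ / s, q.imK / s⟩, Quaternion.imK_mul (R := ℝ) ⟨0, q.imI / s, q.imJ / s, q.imK / s⟩ ⟨0, q.imI / s, q.imJ / s, q.imK / s⟩,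
          Quaternion.re_neg, Quaternion.imI_neg, Quaternion.imJ_neg, Quaternion.imK_neg,
          Quaternion.re_one, Quaternion.imI_one, Quaternion.imJ_one, Quaternion.imK_one, neg_zero]
      · field_simp
        linear_combination hssq
      all_goals ring
    · erw [Complex.liftAux_apply]
      ext <;>
        simp only [Quaternion.re_add, Quaternion.imI_add, Quaternion.imJ_add, Quaternion.imK_add,
          Quaternion.re_smul, Quaternion.imI_smul, Quaternion.imJ_smul, Quaternion.imK_smul,
          Quaternion.re_smul (R := ℝ) (a := ⟨0, q.imI / s, q.imJ / s, q.imK / s⟩) s, Quaternion.imI_smul (R := ℝ) (a := ⟨0, q.imI / s, q.imJ / s, q.imK / s⟩) s, Quaternion.imJ_smul (R := ℝ) (a := ⟨0, q.imI / s, q.imJ / s, q.imK / s⟩) s, Quaternion.imK_smul (R := ℝ) (a := ⟨0, q.imI / s, q.imJ / s, q.imK / s⟩) s,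
          Quaternion.algebraMap_def, Quaternion.re_coe, Quaternion.imI_coe, Quaternion.imJ_coe,
          Quaternion.imK_coe, smul_eq_mul, zero_add, mul_zero, add_zero] <;>
        field_simp


/-- If `f(q) = ∑ qⁿ aₙ` with real coefficients, `f(0)=0`, `f'(0)=1`, converges on the unit
ball, is injective there, and its image of one slice `B(0;1) ∩ ℂ_I` is starlike, then
`f(B(0;1))` is starlike: for every `t ∈ [0,1]` and `q` in the ball there is `p` in the ball
with `t·f(q) = f(p)`. -/
theorem stmt17 (a : ℕ → ℝ) (ha0 : a 0 = 0) (ha1 : a 1 = 1)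
    (hconv : ∀ q : Quaternion ℝ, ‖q‖ < 1 → Summable (fun n : ℕ => a n • q ^ n))
    (f : Quaternion ℝ → Quaternion ℝ)
    (hfdef : ∀ q : Quaternion ℝ, ‖q‖ < 1 → f q = ∑' n : ℕ, a n • q ^ n)
    (hinj : Set.InjOn f (Metric.ball (0 : Quaternion ℝ) 1))
    (I : Quaternion ℝ) (hI : I ^ 2 = -1)
    (hstar : ∀ t : ℝ, t ∈ Set.Icc (0 : ℝ) 1 →
      ∀ z : Quaternion ℝ, ‖z‖ < 1 → (∃ x y : ℝ, z = (x : Quaternion ℝ) + y • I) →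
        ∃ p : Quaternion ℝ, ‖p‖ < 1 ∧ (∃ x y : ℝ, p = (x : Quaternion ℝ) + y • I) ∧
          t • f z = f p) :
    ∀ t : ℝ, t ∈ Set.Icc (0 : ℝ) 1 → ∀ q : Quaternion ℝ, ‖q‖ < 1 →
      ∃ p : Quaternion ℝ, ‖p‖ < 1 ∧ t • f q = f p := by
  intro t ht q hq
  have hI' : I * I = -1 := by rwa [← sq]
  obtain ⟨J, hJ, z, rfl⟩ := aux_decomp I hI' q
  have hz : ‖z‖ < 1 := by rwa [aux_norm_lift] at hq
  -- apply hstar to the corresponding point on the I-slice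
  have hIz : ‖Complex.liftAux I hI' z‖ < 1 := by rwa [aux_norm_lift]
  obtain ⟨p, hp1, ⟨x, y, hpxy⟩, hpe⟩ := hstar t ht (Complex.liftAux I hI' z) hIz
    ⟨z.re, z.im, by rw [Complex.liftAux_apply, Quaternion.algebraMap_def]⟩
  set w : ℂ := ⟨x, y⟩ with hw
  have hpw : p = Complex.liftAux I hI' w := by
    rw [Complex.liftAux_apply, Quaternion.algebraMap_def, hpxy]
  have hwlt : ‖w‖ < 1 := by rwa [hpw, aux_norm_lift] at hp1
  -- translate hpe into the complex series
  have hfI : f (Complex.liftAux I hI' z) = Complex.liftAux I hI' (∑' n : ℕ, a n • z ^ n) :=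
    aux_f_lift a hconv f hfdef I hI' z hz
  have hfw : f p = Complex.liftAux I hI' (∑' n : ℕ, a n • w ^ n) := by
    rw [hpw]; exact aux_f_lift a hconv f hfdef I hI' w hwlt
  have hkey : t • (∑' n : ℕ, a n • z ^ n) = ∑' n : ℕ, a n • w ^ n := by
    apply aux_inj I hI'
    rw [map_smul]
    rw [hfI, hfw] at hpe
    exact hpe
  refine ⟨Complex.liftAux J hJ w, by rwa [aux_norm_lift], ?_⟩
  rw [aux_f_lift a hconv f hfdef J hJ z hz, aux_f_lift a hconv f hfdef J hJ w hwlt,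
    ← hkey, map_smul]
end
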